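/- arXiv:1804.00055 — 3 statements merged into one kernel-verified Lean document; each statement's English description precedes it below -/
import Mathlib

section
/- Let A = {a_1, …, a_k} be a set of consecutive integers, S_A the symmetric group permuting A, and T a standard Young tableau of shape λ whose entries include A. If two elements of A lie in the same column of T, then Σ_{π ∈ S_A} λ(π)|T⟩ = 0, where λ is the Young orthogonal representation of shape λ. -/
/-- A standard Young tableau of shape `μ`, recorded by the position `pos k` of the
entry `k` (entries are `0`-indexed, running over `0, …, μ.card - 1`). Entries
strictly increase along rows (left to right) and down columns. -/
structure SYT (μ : YoungDiagram) where
  pos : ℕ → ℕ × ℕ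
  mem : ∀ k, k < μ.card → pos k ∈ μ.cells
  surj : ∀ c ∈ μ.cells, ∃ k, k < μ.card ∧ pos k = c
  inj : ∀ k l, k < μ.card → l < μ.card → pos k = pos l → k = l
  row_incr : ∀ k l, k < μ.card → l < μ.card →
    (pos k).1 = (pos l).1 → (pos k).2 < (pos l).2 → k < l
  col_incr : ∀ k l, k < μ.card → l < μ.card →
    (pos k).2 = (pos l).2 → (pos k).1 < (pos l).1 → k < l
  out : ∀ k, μ.card ≤ k → pos k = (0, 0)

/-- Entries `k` and `k+1` lie in the same row of `T`. -/
def SYT.sameRow {μ : YoungDiagram} (T : SYT μ) (k : ℕ) : Prop :=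
  (T.pos k).1 = (T.pos (k + 1)).1

/-- Entries `k` and `k+1` lie in the same column of `T`. -/
def SYT.sameCol {μ : YoungDiagram} (T : SYT μ) (k : ℕ) : Prop :=
  (T.pos k).2 = (T.pos (k + 1)).2

/-- `T'` is the tableau `(k, k+1) T` obtained from `T` by exchanging the entries
`k` and `k+1`. -/
def SYT.IsSwapped {μ : YoungDiagram} (T T' : SYT μ) (k : ℕ) : Prop :=
  T'.pos k = T.pos (k + 1) ∧ T'.pos (k + 1) = T.pos k ∧
    ∀ m, m ≠ k → m ≠ k + 1 → T'.pos m = T.pos m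

/-- The (signed) axial Manhattan distance from the box of `k` to the box of `k+1` in `T`:
steps up plus steps right minus steps left minus steps down. -/
def SYT.axialDist {μ : YoungDiagram} (T : SYT μ) (k : ℕ) : ℤ :=
  (((T.pos (k + 1)).2 : ℤ) - ((T.pos k).2 : ℤ)) +
    (((T.pos k).1 : ℤ) - ((T.pos (k + 1)).1 : ℤ))

/-- The coefficient `a_k^T`, the reciprocal of the axial distance between the boxes of
`k` and `k+1`. -/
noncomputable def SYT.aCoef {μ : YoungDiagram} (T : SYT μ) (k : ℕ) : ℝ :=
  ((T.axialDist k : ℤ) : ℝ)⁻¹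

/-- The coefficient `b_k^T = √(1 - (a_k^T)²)`. -/
noncomputable def SYT.bCoef {μ : YoungDiagram} (T : SYT μ) (k : ℕ) : ℝ :=
  Real.sqrt (1 - (T.aCoef k) ^ 2)

/-- `ρ`, together with the family of basis vectors `vec` indexed by the standard Young
tableaux of shape `μ`, satisfies the defining rules of the Young orthogonal
(Young–Yamanouchi) representation: adjacent transpositions `(k, k+1)` act by `+1` on `|T⟩`
if `k, k+1` are in the same row of `T`, by `-1` if in the same column, and otherwise by
`(k,k+1)|T⟩ = a|T⟩ + b|(k,k+1)T⟩` with `a` the reciprocal axial distance and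
`b = √(1-a²)`. -/
def YoungOrthogonalRules {μ : YoungDiagram} {V : Type*} [AddCommGroup V] [Module ℝ V]
    (ρ : Equiv.Perm ℕ →* (V →ₗ[ℝ] V)) (vec : SYT μ → V) : Prop :=
  ∀ (T : SYT μ) (k : ℕ), k + 1 < μ.card →
    (T.sameRow k → ρ (Equiv.swap k (k + 1)) (vec T) = vec T) ∧
    (T.sameCol k → ρ (Equiv.swap k (k + 1)) (vec T) = -vec T) ∧
    (¬T.sameRow k → ¬T.sameCol k → ∀ T' : SYT μ, SYT.IsSwapped T T' k →
      ρ (Equiv.swap k (k + 1)) (vec T) = T.aCoef k • vec T + T.bCoef k • vec T')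

namespace SYTAux

variable {μ : YoungDiagram}

lemma no_downright (T : SYT μ) (k : ℕ) (hk : k + 1 < μ.card)
    (h1 : (T.pos k).1 < (T.pos (k+1)).1) (h2 : (T.pos k).2 < (T.pos (k+1)).2) : False := by
  have hmem : T.pos (k+1) ∈ μ.cells := T.mem (k+1) hk
  have hcell : ((T.pos k).1, (T.pos (k+1)).2) ∈ μ.cells := by
    rw [YoungDiagram.mem_cells] at hmem ⊢
    exact μ.up_left_mem (le_of_lt h1) le_rfl (by simpa using hmem)
  obtain ⟨e, he, hpe⟩ := T.surj _ hcell
  have h3 : k < e := T.row_incr k e (by omega) he (by simp [hpe]) (by simp [hpe]; exact h2)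
  have h4 : e < k + 1 := T.col_incr e (k+1) he hk (by simp [hpe]) (by simp [hpe]; exact h1)
  omega

lemma no_upleft (T : SYT μ) (k : ℕ) (hk : k + 1 < μ.card)
    (h1 : (T.pos (k+1)).1 < (T.pos k).1) (h2 : (T.pos (k+1)).2 < (T.pos k).2) : False := by
  have hmem : T.pos k ∈ μ.cells := T.mem k (by omega)
  have hcell : ((T.pos (k+1)).1, (T.pos k).2) ∈ μ.cells := by
    rw [YoungDiagram.mem_cells] at hmem ⊢
    exact μ.up_left_mem (le_of_lt h1) le_rfl (by simpa using hmem)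
  obtain ⟨e, he, hpe⟩ := T.surj _ hcell
  have h3 : e < k := T.col_incr e k he (by omega) (by simp [hpe]) (by simp [hpe]; exact h1)
  have h4 : k + 1 < e := T.row_incr (k+1) e hk he (by simp [hpe]) (by simp [hpe]; exact h2)
  omega

lemma aCoef_ne_one (T : SYT μ) (k : ℕ) (hk : k + 1 < μ.card)
    (hrow : ¬ T.sameRow k) (hcol : ¬ T.sameCol k) : T.aCoef k ≠ 1 := by
  have hd : T.axialDist k ≠ 1 := by
    unfold SYT.sameRow at hrow
    unfold SYT.sameCol at hcol
    unfold SYT.axialDist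
    have q1 : ¬((T.pos k).1 < (T.pos (k+1)).1 ∧ (T.pos k).2 < (T.pos (k+1)).2) :=
      fun h => no_downright T k hk h.1 h.2
    have q2 : ¬((T.pos (k+1)).1 < (T.pos k).1 ∧ (T.pos (k+1)).2 < (T.pos k).2) :=
      fun h => no_upleft T k hk h.1 h.2
    omega
  intro h
  apply hd
  have h1 : ((T.axialDist k : ℤ) : ℝ)⁻¹ = 1 := h
  have h2 : ((T.axialDist k : ℤ) : ℝ) = 1 := inv_eq_one.mp h1
  exact_mod_cast h2

def swapPos (T : SYT μ) (k : ℕ) : ℕ → ℕ × ℕ := fun m =>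
  if m = k then T.pos (k+1) else if m = k+1 then T.pos k else T.pos m

def swappedSYT (T : SYT μ) (k : ℕ) (hk : k + 1 < μ.card)
    (hrow : ¬ T.sameRow k) (hcol : ¬ T.sameCol k) : SYT μ where
  pos := swapPos T k
  mem m hm := by
    unfold swapPos
    split_ifs with h1 h2
    · exact T.mem _ hk
    · exact T.mem _ (by omega)
    · exact T.mem _ hm
  surj c hc := by
    obtain ⟨e, he, hpe⟩ := T.surj c hc
    rcases eq_or_ne e k with h1 | h1
    · refine ⟨k+1, hk, ?_⟩
      have hs : swapPos T k (k+1) = T.pos k := by simp [swapPos]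
      rw [hs, ← h1]; exact hpe
    rcases eq_or_ne e (k+1) with h2 | h2
    · refine ⟨k, by omega, ?_⟩
      have hs : swapPos T k k = T.pos (k+1) := by simp [swapPos]
      rw [hs, ← h2]; exact hpe
    · exact ⟨e, he, by simpa [swapPos, h1, h2] using hpe⟩
  inj m l hm hl h := by
    unfold swapPos at h
    split_ifs at h with h1 h2 h3 h4 h5 h6 h7 h8 h9 <;>
      first
        | omega
        | (have := T.inj _ _ (by omega) (by omega) h; omega)
  row_incr m l hm hl h1 h2 := by
    unfold SYT.sameRow at hrow
    unfold swapPos at h1 h2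
    split_ifs at h1 h2 <;>
      (have := T.row_incr _ _ (by omega) (by omega) h1 h2; omega)
  col_incr m l hm hl h1 h2 := by
    unfold SYT.sameCol at hcol
    unfold swapPos at h1 h2
    split_ifs at h1 h2 <;>
      (have := T.col_incr _ _ (by omega) (by omega) h1 h2; omega)
  out m hm := by
    have h1 : m ≠ k := by omega
    have h2 : m ≠ k + 1 := by omega
    unfold swapPos
    rw [if_neg h1, if_neg h2]
    exact T.out m hm

lemma isSwapped_swappedSYT (T : SYT μ) (k : ℕ) (hk : k + 1 < μ.card)
    (hrow : ¬ T.sameRow k) (hcol : ¬ T.sameCol k) :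
    T.IsSwapped (swappedSYT T k hk hrow hcol) k := by
  refine ⟨?_, ?_, ?_⟩
  · show swapPos T k k = _
    simp [swapPos]
  · show swapPos T k (k+1) = _
    simp [swapPos]
  · intro m h1 h2
    show swapPos T k m = _
    simp [swapPos, h1, h2]


variable {V : Type*} [AddCommGroup V] [Module ℝ V]

lemma ext_swap (A : Finset ℕ) (u v : {x : ℕ // x ∈ A}) :
    Equiv.Perm.extendDomain (Equiv.swap u v) (Equiv.refl {x : ℕ // x ∈ A})
      = Equiv.swap (u : ℕ) (v : ℕ) := by
  ext x
  by_cases hx : x ∈ A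
  · rw [Equiv.Perm.extendDomain_apply_subtype _ _ hx]
    simp only [Equiv.refl_symm, Equiv.refl_apply]
    rcases eq_or_ne (⟨x, hx⟩ : {x : ℕ // x ∈ A}) u with h | h1
    · have hx' : x = (u : ℕ) := by rw [← h]
      rw [h, Equiv.swap_apply_left, hx', Equiv.swap_apply_left]
    · rcases eq_or_ne (⟨x, hx⟩ : {x : ℕ // x ∈ A}) v with h | h2
      · have hx' : x = (v : ℕ) := by rw [← h]
        rw [h, Equiv.swap_apply_right, hx', Equiv.swap_apply_right]
      · have hx1 : x ≠ (u : ℕ) := fun hh => h1 (Subtype.ext hh)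
        have hx2 : x ≠ (v : ℕ) := fun hh => h2 (Subtype.ext hh)
        rw [Equiv.swap_apply_of_ne_of_ne h1 h2, Equiv.swap_apply_of_ne_of_ne hx1 hx2]
  · rw [Equiv.Perm.extendDomain_apply_not_subtype _ _ hx,
      Equiv.swap_apply_of_ne_of_ne (fun h => hx (by rw [h]; exact u.2)) (fun h => hx (by rw [h]; exact v.2))]

lemma sum_apply_extend (ρ : Equiv.Perm ℕ →* (V →ₗ[ℝ] V)) (A : Finset ℕ)
    (τ : Equiv.Perm {x : ℕ // x ∈ A}) (v : V) :
    ∑ σ : Equiv.Perm {x : ℕ // x ∈ A},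
        ρ (σ.extendDomain (Equiv.refl {x : ℕ // x ∈ A}))
          (ρ (τ.extendDomain (Equiv.refl {x : ℕ // x ∈ A})) v)
      = ∑ σ : Equiv.Perm {x : ℕ // x ∈ A},
          ρ (σ.extendDomain (Equiv.refl {x : ℕ // x ∈ A})) v := by
  have key : ∀ σ : Equiv.Perm {x : ℕ // x ∈ A},
      ρ (σ.extendDomain (Equiv.refl {x : ℕ // x ∈ A}))
          (ρ (τ.extendDomain (Equiv.refl {x : ℕ // x ∈ A})) v)
        = ρ ((σ * τ).extendDomain (Equiv.refl {x : ℕ // x ∈ A})) v := by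
    intro σ
    rw [← Equiv.Perm.extendDomain_mul, map_mul]
    rfl
  simp_rw [key]
  exact Fintype.sum_equiv (Equiv.mulRight τ) _ _ (fun σ => rfl)


variable {μ : YoungDiagram} {V : Type*} [AddCommGroup V] [Module ℝ V]

lemma kill_col (ρ : Equiv.Perm ℕ →* (V →ₗ[ℝ] V)) (vec : SYT μ → V)
    (hrules : YoungOrthogonalRules ρ vec) (A : Finset ℕ) (T' : SYT μ) (k : ℕ)
    (hkA : k ∈ A) (hk1A : k + 1 ∈ A) (hk : k + 1 < μ.card) (hcol : T'.sameCol k) :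
    ∑ σ : Equiv.Perm {x : ℕ // x ∈ A},
      ρ (σ.extendDomain (Equiv.refl {x : ℕ // x ∈ A})) (vec T') = 0 := by
  set S := ∑ σ : Equiv.Perm {x : ℕ // x ∈ A},
      ρ (σ.extendDomain (Equiv.refl {x : ℕ // x ∈ A})) (vec T') with hS
  have h1 : S = -S := by
    calc S = ∑ σ : Equiv.Perm {x : ℕ // x ∈ A},
          ρ (σ.extendDomain (Equiv.refl {x : ℕ // x ∈ A}))
            (ρ ((Equiv.swap (⟨k, hkA⟩ : {x : ℕ // x ∈ A}) ⟨k+1, hk1A⟩).extendDomain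
              (Equiv.refl {x : ℕ // x ∈ A})) (vec T')) :=
        (sum_apply_extend ρ A _ _).symm
      _ = ∑ σ : Equiv.Perm {x : ℕ // x ∈ A},
          ρ (σ.extendDomain (Equiv.refl {x : ℕ // x ∈ A})) (-(vec T')) := by
        rw [ext_swap]
        simp only [(hrules T' k hk).2.1 hcol]
      _ = -S := by simp [hS]
  have h2 : S + S = 0 := by nth_rewrite 2 [h1]; simp
  have h4 : (2:ℝ) • S = 0 := by rw [two_smul]; exact h2
  have h5 := congrArg (fun w => ((2:ℝ)⁻¹) • w) h4
  simpa [smul_smul] using h5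

lemma kill_swap (ρ : Equiv.Perm ℕ →* (V →ₗ[ℝ] V)) (vec : SYT μ → V)
    (hrules : YoungOrthogonalRules ρ vec) (A : Finset ℕ) (T' : SYT μ) (k : ℕ)
    (hkA : k ∈ A) (hk1A : k + 1 ∈ A) (hk : k + 1 < μ.card)
    (hrow : ¬ T'.sameRow k) (hcol : ¬ T'.sameCol k)
    (hzero : ∑ σ : Equiv.Perm {x : ℕ // x ∈ A},
      ρ (σ.extendDomain (Equiv.refl {x : ℕ // x ∈ A}))
        (vec (swappedSYT T' k hk hrow hcol)) = 0) :
    ∑ σ : Equiv.Perm {x : ℕ // x ∈ A},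
      ρ (σ.extendDomain (Equiv.refl {x : ℕ // x ∈ A})) (vec T') = 0 := by
  set S := ∑ σ : Equiv.Perm {x : ℕ // x ∈ A},
      ρ (σ.extendDomain (Equiv.refl {x : ℕ // x ∈ A})) (vec T') with hS
  have hr := (hrules T' k hk).2.2 hrow hcol (swappedSYT T' k hk hrow hcol)
    (isSwapped_swappedSYT T' k hk hrow hcol)
  have h1 : S = T'.aCoef k • S := by
    calc S = ∑ σ : Equiv.Perm {x : ℕ // x ∈ A},
          ρ (σ.extendDomain (Equiv.refl {x : ℕ // x ∈ A}))
            (ρ ((Equiv.swap (⟨k, hkA⟩ : {x : ℕ // x ∈ A}) ⟨k+1, hk1A⟩).extendDomain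
              (Equiv.refl {x : ℕ // x ∈ A})) (vec T')) :=
        (sum_apply_extend ρ A _ _).symm
      _ = ∑ σ : Equiv.Perm {x : ℕ // x ∈ A},
          ρ (σ.extendDomain (Equiv.refl {x : ℕ // x ∈ A}))
            (T'.aCoef k • vec T' + T'.bCoef k • vec (swappedSYT T' k hk hrow hcol)) := by
        rw [ext_swap]
        simp only [hr]
      _ = T'.aCoef k • S + T'.bCoef k •
            ∑ σ : Equiv.Perm {x : ℕ // x ∈ A},
              ρ (σ.extendDomain (Equiv.refl {x : ℕ // x ∈ A}))
                (vec (swappedSYT T' k hk hrow hcol)) := by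
        simp [hS, map_add, map_smul, Finset.sum_add_distrib, Finset.smul_sum]
      _ = T'.aCoef k • S := by rw [hzero, smul_zero, add_zero]
  have h2 : (1 - T'.aCoef k) • S = 0 := by
    rw [sub_smul, one_smul, sub_eq_zero]; exact h1
  have ha := aCoef_ne_one T' k hk hrow hcol
  rcases smul_eq_zero.mp h2 with h | h
  · exact absurd (by linarith [h] : T'.aCoef k = 1) ha
  · exact h


variable {μ : YoungDiagram} {V : Type*} [AddCommGroup V] [Module ℝ V]

lemma outer_key (ρ : Equiv.Perm ℕ →* (V →ₗ[ℝ] V)) (vec : SYT μ → V)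
    (hrules : YoungOrthogonalRules ρ vec) (a b : ℕ) (A : Finset ℕ)
    (hA : A = Finset.Icc a b) (hsub : ∀ x ∈ A, x < μ.card) :
    ∀ g x y c r (T' : SYT μ), y - x ≤ g → x ∈ A → y ∈ A → x < y →
      T'.pos x = (r, c) → T'.pos y = (r + 1, c) →
      ∑ σ : Equiv.Perm {x : ℕ // x ∈ A},
        ρ (σ.extendDomain (Equiv.refl {x : ℕ // x ∈ A})) (vec T') = 0 := by
  intro g
  induction g using Nat.strong_induction_on with
  | _ g IHg =>
  have inner : ∀ m x y c r (T' : SYT μ), y - x ≤ g → x ∈ A → y ∈ A → x < y →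
      T'.pos x = (r, c) → T'.pos y = (r + 1, c) → x < m → m ≤ y → (T'.pos m).1 ≠ r →
      (∀ t, x < t → t < m → (T'.pos t).1 = r) →
      ∑ σ : Equiv.Perm {x : ℕ // x ∈ A},
        ρ (σ.extendDomain (Equiv.refl {x : ℕ // x ∈ A})) (vec T') = 0 := by
    intro m
    induction m using Nat.strong_induction_on with
    | _ m IHm =>
    intro x y c r T' hg hxA hyA hxy hpx hpy hm1 hm2 hmr hbet
    have hAx : a ≤ x ∧ x ≤ b := by rw [hA] at hxA; exact Finset.mem_Icc.mp hxA
    have hAy : a ≤ y ∧ y ≤ b := by rw [hA] at hyA; exact Finset.mem_Icc.mp hyA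
    have hmA : m ∈ A := by rw [hA]; exact Finset.mem_Icc.mpr ⟨by omega, by omega⟩
    have hm1A : m - 1 ∈ A := by rw [hA]; exact Finset.mem_Icc.mpr ⟨by omega, by omega⟩
    have hmcard : m < μ.card := hsub m hmA
    have hm1r : (T'.pos (m-1)).1 = r := by
      rcases eq_or_lt_of_le (by omega : x ≤ m - 1) with h | h
      · rw [← h, hpx]
      · exact hbet (m-1) h (by omega)
    have hmm : m - 1 + 1 = m := by omega
    by_cases hcc : (T'.pos (m-1)).2 = (T'.pos m).2
    · exact kill_col ρ vec hrules A T' (m-1) hm1A (by rwa [hmm]) (by rwa [hmm])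
        (by unfold SYT.sameCol; rwa [hmm])
    · have hrow : ¬ T'.sameRow (m-1) := by
        unfold SYT.sameRow; rw [hmm, hm1r]; exact fun h => hmr h.symm
      have hcol : ¬ T'.sameCol (m-1) := by unfold SYT.sameCol; rwa [hmm]
      have hkcard : (m-1) + 1 < μ.card := by omega
      obtain ⟨hs1, hs2, hs3⟩ := isSwapped_swappedSYT T' (m-1) hkcard hrow hcol
      rw [hmm] at hs1 hs2
      set T'' := swappedSYT T' (m-1) hkcard hrow hcol with hT''
      apply kill_swap ρ vec hrules A T' (m-1) hm1A (by rwa [hmm]) hkcard hrow hcol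
      show ∑ σ : Equiv.Perm {x : ℕ // x ∈ A},
        ρ (σ.extendDomain (Equiv.refl {x : ℕ // x ∈ A})) (vec T'') = 0
      rcases eq_or_lt_of_le (by omega : x ≤ m - 1) with hx1 | hx1
      · -- m - 1 = x
        have hmy : m ≠ y := by
          intro h
          apply hcc
          rw [← hx1, hpx, h, hpy]
        have hx1m : x + 1 = m := by omega
        refine IHg (y - (x+1)) (by omega) (x+1) y c r T'' le_rfl ?_ hyA (by omega) ?_ ?_
        · rw [hA]; exact Finset.mem_Icc.mpr ⟨by omega, by omega⟩
        · rw [hx1m, hs2, ← hx1, hpx]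
        · rw [hs3 y (by omega) (by omega), hpy]
      · rcases eq_or_lt_of_le hm2 with hmy | hmy
        · -- m = y
          refine IHg ((m-1) - x) (by omega) x (m-1) c r T'' le_rfl hxA hm1A (by omega) ?_ ?_
          · rw [hs3 x (by omega) (by omega), hpx]
          · rw [hs1, hmy, hpy]
        · -- m < y
          refine IHm (m-1) (by omega) x y c r T'' hg hxA hyA hxy ?_ ?_ (by omega) (by omega) ?_ ?_
          · rw [hs3 x (by omega) (by omega), hpx]
          · rw [hs3 y (by omega) (by omega), hpy]
          · rw [hs1]; exact hmr
          · intro t h1 h2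
            rw [hs3 t (by omega) (by omega)]
            exact hbet t h1 (by omega)
  intro x y c r T' hg hxA hyA hxy hpx hpy
  classical
  have hex : ∃ t, x < t ∧ t ≤ y ∧ (T'.pos t).1 ≠ r :=
    ⟨y, hxy, le_rfl, by rw [hpy]; simp⟩
  obtain ⟨h1, h2, h3⟩ := Nat.find_spec hex
  refine inner (Nat.find hex) x y c r T' hg hxA hyA hxy hpx hpy h1 h2 h3 ?_
  intro t ht1 ht2
  by_contra hne
  exact Nat.find_min hex ht2 ⟨ht1, by omega, hne⟩

end SYTAux

/-- Let `A = {a, …, b}` be a set of consecutive integers whose elements all occur as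
entries of the standard Young tableau `T` of shape `μ`, and let `S_A` be the subgroup of
permutations of `A` (embedded into the permutations of `ℕ` by fixing everything outside
`A`). If two elements of `A` lie in the same column of `T`, then
`Σ_{π ∈ S_A} λ(π)|T⟩ = 0` in the Young orthogonal representation. -/
theorem young_orthogonal_vertical_annihilates {μ : YoungDiagram} {V : Type*}
    [AddCommGroup V] [Module ℝ V] (ρ : Equiv.Perm ℕ →* (V →ₗ[ℝ] V)) (vec : SYT μ → V)
    (hrules : YoungOrthogonalRules ρ vec)
    (T : SYT μ) (a b : ℕ) (A : Finset ℕ) (hA : A = Finset.Icc a b)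
    (hsub : ∀ x ∈ A, x < μ.card)
    (hcolumn : ∃ x ∈ A, ∃ y ∈ A, x ≠ y ∧ (T.pos x).2 = (T.pos y).2) :
    ∑ σ : Equiv.Perm {x : ℕ // x ∈ A},
      ρ (σ.extendDomain (Equiv.refl {x : ℕ // x ∈ A})) (vec T) = 0 := by
  obtain ⟨x, hxA, y, hyA, hne, hcxy⟩ := hcolumn
  have main : ∀ x y, x ∈ A → y ∈ A → x < y → (T.pos x).2 = (T.pos y).2 →
      ∑ σ : Equiv.Perm {x : ℕ // x ∈ A},
        ρ (σ.extendDomain (Equiv.refl {x : ℕ // x ∈ A})) (vec T) = 0 := by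
    intro x y hxA hyA hxy hc
    have hxc := hsub x hxA
    have hyc := hsub y hyA
    have hrxy : (T.pos x).1 < (T.pos y).1 := by
      rcases lt_trichotomy (T.pos x).1 (T.pos y).1 with h | h | h
      · exact h
      · have := T.inj x y hxc hyc (Prod.ext h hc)
        omega
      · have := T.col_incr y x hyc hxc hc.symm h
        omega
    have hcell : ((T.pos x).1 + 1, (T.pos x).2) ∈ μ.cells := by
      rw [YoungDiagram.mem_cells]
      have hmy := T.mem y hyc
      rw [YoungDiagram.mem_cells] at hmy
      exact μ.up_left_mem (i2 := (T.pos y).1) (j2 := (T.pos y).2) (by omega) (le_of_eq hc)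
        (by simpa using hmy)
    obtain ⟨z, hz, hpz⟩ := T.surj _ hcell
    have hxz : x < z := T.col_incr x z hxc hz (by simp [hpz]) (by simp [hpz])
    have hzy : z ≤ y := by
      rcases eq_or_lt_of_le (show (T.pos x).1 + 1 ≤ (T.pos y).1 from hrxy) with h | h
      · have : z = y := T.inj z y hz hyc (by rw [hpz]; exact Prod.ext h hc)
        omega
      · have := T.col_incr z y hz hyc (by simp [hpz, hc]) (by simp [hpz]; omega)
        omega
    have hzA : z ∈ A := by
      rw [hA] at hxA hyA ⊢
      rw [Finset.mem_Icc] at hxA hyA ⊢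
      omega
    exact SYTAux.outer_key ρ vec hrules a b A hA hsub (z - x) x z (T.pos x).2 (T.pos x).1 T
      le_rfl hxA hzA hxz rfl hpz
  rcases lt_or_gt_of_ne hne with h | h
  · exact main x y hxA hyA h hcxy
  · exact main y x hyA hxA h hcxy.symm
end

section
/- Let A be a set of consecutive integers and T a standard Young tableau such that, for every pair of elements of A, no two lie in the same column of T (the boxes of A form a horizontal strip in T). Then the vector Σ_{π ∈ S_A} λ(π)|T⟩ is nonzero in the Young orthogonal representation. -/
-- auxiliary lemmas

lemma aux_swap_lt_iff {c k : ℕ} (hk : k + 1 < c) (m : ℕ) :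
    Equiv.swap k (k+1) m < c ↔ m < c := by
  simp only [Equiv.swap_apply_def]
  split_ifs <;> omega

lemma aux_swap_strict_mono {k m l : ℕ} (h : m < l) (hne : ¬(m = k ∧ l = k+1)) :
    Equiv.swap k (k+1) m < Equiv.swap k (k+1) l := by
  simp only [Equiv.swap_apply_def]
  split_ifs <;> omega

def SYT.swapped {μ : YoungDiagram} (T : SYT μ) (k : ℕ) (hk : k + 1 < μ.card)
    (hrow : ¬ T.sameRow k) (hcol : ¬ T.sameCol k) : SYT μ where
  pos m := T.pos (Equiv.swap k (k+1) m)
  mem m hm := T.mem _ ((aux_swap_lt_iff hk m).2 hm)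
  surj c hc := by
    obtain ⟨m, hm, hpm⟩ := T.surj c hc
    refine ⟨Equiv.swap k (k+1) m, (aux_swap_lt_iff hk _).2 hm, ?_⟩
    show T.pos (Equiv.swap k (k+1) (Equiv.swap k (k+1) m)) = c
    rwa [Equiv.swap_apply_self]
  inj m l hm hl hp := by
    have hp' : T.pos (Equiv.swap k (k+1) m) = T.pos (Equiv.swap k (k+1) l) := hp
    have := T.inj _ _ ((aux_swap_lt_iff hk m).2 hm) ((aux_swap_lt_iff hk l).2 hl) hp'
    exact (Equiv.swap k (k+1)).injective this
  row_incr m l hm hl hrow' hcol' := by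
    have hrow'' : (T.pos (Equiv.swap k (k+1) m)).1 = (T.pos (Equiv.swap k (k+1) l)).1 := hrow'
    have hcol'' : (T.pos (Equiv.swap k (k+1) m)).2 < (T.pos (Equiv.swap k (k+1) l)).2 := hcol'
    have hlt : Equiv.swap k (k+1) m < Equiv.swap k (k+1) l :=
      T.row_incr _ _ ((aux_swap_lt_iff hk m).2 hm) ((aux_swap_lt_iff hk l).2 hl) hrow'' hcol''
    have key : ¬(Equiv.swap k (k+1) m = k ∧ Equiv.swap k (k+1) l = k+1) := by
      rintro ⟨h1, h2⟩
      rw [h1, h2] at hrow''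
      exact hrow hrow''
    have := aux_swap_strict_mono hlt key
    rwa [Equiv.swap_apply_self, Equiv.swap_apply_self] at this
  col_incr m l hm hl hcol' hrow' := by
    have hcol'' : (T.pos (Equiv.swap k (k+1) m)).2 = (T.pos (Equiv.swap k (k+1) l)).2 := hcol'
    have hrow'' : (T.pos (Equiv.swap k (k+1) m)).1 < (T.pos (Equiv.swap k (k+1) l)).1 := hrow'
    have hlt : Equiv.swap k (k+1) m < Equiv.swap k (k+1) l :=
      T.col_incr _ _ ((aux_swap_lt_iff hk m).2 hm) ((aux_swap_lt_iff hk l).2 hl) hcol'' hrow''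
    have key : ¬(Equiv.swap k (k+1) m = k ∧ Equiv.swap k (k+1) l = k+1) := by
      rintro ⟨h1, h2⟩
      rw [h1, h2] at hcol''
      exact hcol hcol''
    have := aux_swap_strict_mono hlt key
    rwa [Equiv.swap_apply_self, Equiv.swap_apply_self] at this
  out m hm := by
    show T.pos (Equiv.swap k (k+1) m) = (0, 0)
    rw [Equiv.swap_apply_of_ne_of_ne (by omega) (by omega)]
    exact T.out m hm

lemma SYT.swapped_isSwapped {μ : YoungDiagram} (T : SYT μ) (k : ℕ) (hk : k + 1 < μ.card)
    (hrow : ¬ T.sameRow k) (hcol : ¬ T.sameCol k) :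
    T.IsSwapped (T.swapped k hk hrow hcol) k := by
  refine ⟨?_, ?_, fun m h1 h2 => ?_⟩
  · show T.pos (Equiv.swap k (k+1) k) = _; rw [Equiv.swap_apply_left]
  · show T.pos (Equiv.swap k (k+1) (k+1)) = _; rw [Equiv.swap_apply_right]
  · show T.pos (Equiv.swap k (k+1) m) = _; rw [Equiv.swap_apply_of_ne_of_ne h1 h2]

section Part2

variable {μ : YoungDiagram}

/-- `T''` agrees with `T` outside of `A`. -/
def SYTGood (T : SYT μ) (A : Finset ℕ) (T'' : SYT μ) : Prop :=
  ∀ m, m ∉ A → T''.pos m = T.pos m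

/-- Signed axial distance from box `Q` to box `P`. -/
def auxDz (P Q : ℕ × ℕ) : ℤ := ((P.2 : ℤ) - (Q.2 : ℤ)) + ((Q.1 : ℤ) - (P.1 : ℤ))

noncomputable def auxFac (P Q : ℕ × ℕ) : ℝ :=
  Real.sqrt (((auxDz P Q : ℝ) - 1) / ((auxDz P Q : ℝ) + 1))

/-- The set of inverted pairs of `A`-entries in `T''`. -/
def auxInvSet (A : Finset ℕ) (T'' : SYT μ) : Finset (ℕ × ℕ) :=
  (A ×ˢ A).filter fun ij => ij.1 < ij.2 ∧ (T''.pos ij.2).2 < (T''.pos ij.1).2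

noncomputable def auxWt (A : Finset ℕ) (T'' : SYT μ) : ℝ :=
  ∏ ij ∈ auxInvSet A T'', auxFac (T''.pos ij.1) (T''.pos ij.2)

variable {T : SYT μ} {a b : ℕ} {A : Finset ℕ}

lemma aux_strip_row_le (hA : A = Finset.Icc a b) (hsub : ∀ x ∈ A, x < μ.card)
    (hstrip : ∀ x ∈ A, ∀ y ∈ A, (T.pos x).2 = (T.pos y).2 → x = y)
    {y z : ℕ} (hy : y ∈ A) (hz : z ∈ A) (hcol : (T.pos y).2 < (T.pos z).2) :
    (T.pos z).1 ≤ (T.pos y).1 := by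
  by_contra hlt
  push_neg at hlt
  have hzc : T.pos z ∈ μ := (YoungDiagram.mem_cells _).1 (T.mem z (hsub z hz))
  have hbox : ((T.pos y).1, (T.pos z).2) ∈ μ.cells := by
    rw [YoungDiagram.mem_cells]
    exact μ.up_left_mem (le_of_lt hlt) le_rfl (by simpa using hzc)
  obtain ⟨m, hm, hpm⟩ := T.surj _ hbox
  have h1 : y < m := T.row_incr y m (hsub y hy) hm (by rw [hpm]) (by rw [hpm]; exact hcol)
  have h2 : m < z := T.col_incr m z hm (hsub z hz) (by rw [hpm]) (by rw [hpm]; exact hlt)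
  have hmA : m ∈ A := by
    rw [hA] at hy hz ⊢
    simp only [Finset.mem_Icc] at hy hz ⊢
    omega
  have := hstrip m hmA z hz (by rw [hpm])
  omega

lemma aux_good_box (hsub : ∀ x ∈ A, x < μ.card) {T'' : SYT μ} (hG : SYTGood T A T'')
    {x : ℕ} (hx : x ∈ A) : ∃ y ∈ A, T''.pos x = T.pos y := by
  obtain ⟨y, hy, hpy⟩ := T.surj _ (T''.mem x (hsub x hx))
  refine ⟨y, ?_, hpy.symm⟩
  by_contra hyA
  have h1 : T''.pos y = T''.pos x := by rw [hG y hyA, hpy]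
  have := T''.inj y x hy (hsub x hx) h1
  exact hyA (this ▸ hx)

lemma aux_good_col_ne (hsub : ∀ x ∈ A, x < μ.card)
    (hstrip : ∀ x ∈ A, ∀ y ∈ A, (T.pos x).2 = (T.pos y).2 → x = y)
    {T'' : SYT μ} (hG : SYTGood T A T'') {i j : ℕ} (hi : i ∈ A) (hj : j ∈ A)
    (hij : i ≠ j) : (T''.pos i).2 ≠ (T''.pos j).2 := by
  obtain ⟨y, hy, hpy⟩ := aux_good_box hsub hG hi
  obtain ⟨z, hz, hpz⟩ := aux_good_box hsub hG hj
  intro hc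
  rw [hpy, hpz] at hc
  have hyz : y = z := hstrip y hy z hz hc
  apply hij
  exact T''.inj i j (hsub i hi) (hsub j hj) (by rw [hpy, hpz, hyz])

lemma aux_inv_dist (hA : A = Finset.Icc a b) (hsub : ∀ x ∈ A, x < μ.card)
    (hstrip : ∀ x ∈ A, ∀ y ∈ A, (T.pos x).2 = (T.pos y).2 → x = y)
    {T'' : SYT μ} (hG : SYTGood T A T'') {i j : ℕ} (hi : i ∈ A) (hj : j ∈ A)
    (hij : i < j) (hc : (T''.pos j).2 < (T''.pos i).2) :
    2 ≤ auxDz (T''.pos i) (T''.pos j) := by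
  obtain ⟨y, hy, hpy⟩ := aux_good_box hsub hG hi
  obtain ⟨z, hz, hpz⟩ := aux_good_box hsub hG hj
  have hrow : (T.pos y).1 ≤ (T.pos z).1 :=
    aux_strip_row_le hA hsub hstrip hz hy (by rw [← hpy, ← hpz]; exact hc)
  have h1 : (T''.pos i).1 ≤ (T''.pos j).1 := by rw [hpy, hpz]; exact hrow
  by_contra hD
  push_neg at hD
  have hrows : (T''.pos j).1 = (T''.pos i).1 := by unfold auxDz at hD; omega
  have := T''.row_incr j i (hsub j hj) (hsub i hi) hrows hc
  omega

lemma aux_adj_dist (hA : A = Finset.Icc a b) (hsub : ∀ x ∈ A, x < μ.card)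
    (hstrip : ∀ x ∈ A, ∀ y ∈ A, (T.pos x).2 = (T.pos y).2 → x = y)
    {T'' : SYT μ} (hG : SYTGood T A T'') {k : ℕ} (hk : k ∈ A) (hk1 : k+1 ∈ A)
    (hnr : ¬ T''.sameRow k) (hc : (T''.pos k).2 < (T''.pos (k+1)).2) :
    2 ≤ T''.axialDist k := by
  obtain ⟨y, hy, hpy⟩ := aux_good_box hsub hG hk
  obtain ⟨z, hz, hpz⟩ := aux_good_box hsub hG hk1
  have hrow : (T.pos z).1 ≤ (T.pos y).1 :=
    aux_strip_row_le hA hsub hstrip hy hz (by rw [← hpy, ← hpz]; exact hc)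
  have h1 : (T''.pos (k+1)).1 ≤ (T''.pos k).1 := by rw [hpy, hpz]; exact hrow
  unfold SYT.sameRow at hnr
  unfold SYT.axialDist
  omega

lemma aux_swap_mem_A {k : ℕ} (hk : k ∈ A) (hk1 : k+1 ∈ A) {m : ℕ} (hm : m ∈ A) :
    Equiv.swap k (k+1) m ∈ A := by
  rcases eq_or_ne m k with h|h1
  · rw [h, Equiv.swap_apply_left]; exact hk1
  rcases eq_or_ne m (k+1) with h|h2
  · rw [h, Equiv.swap_apply_right]; exact hk
  · rwa [Equiv.swap_apply_of_ne_of_ne h1 h2]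

lemma aux_invSet_swap_mem {k : ℕ} (hk : k ∈ A) (hk1 : k+1 ∈ A) {T1 T2 : SYT μ}
    (hps : ∀ m, T2.pos m = T1.pos (Equiv.swap k (k+1) m)) {ij : ℕ × ℕ}
    (h : ij ∈ auxInvSet A T2) (hne : ij ≠ (k, k+1)) :
    (Equiv.swap k (k+1) ij.1, Equiv.swap k (k+1) ij.2) ∈ auxInvSet A T1 := by
  obtain ⟨i, j⟩ := ij
  simp only [auxInvSet, Finset.mem_filter, Finset.mem_product] at h ⊢
  obtain ⟨⟨hiA, hjA⟩, hij, hcol⟩ := h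
  have hne' : ¬(i = k ∧ j = k+1) := by
    rintro ⟨rfl, rfl⟩; exact hne rfl
  refine ⟨⟨aux_swap_mem_A hk hk1 hiA, aux_swap_mem_A hk hk1 hjA⟩,
    aux_swap_strict_mono hij hne', ?_⟩
  rw [← hps i, ← hps j]
  exact hcol

lemma aux_invSet_swap {k : ℕ} (hk : k ∈ A) (hk1 : k+1 ∈ A) {T'' T''' : SYT μ}
    (hsw : T''.IsSwapped T''' k) (hninv : (T''.pos k).2 < (T''.pos (k+1)).2) :
    auxInvSet A T''' = insert (k, k+1)
      ((auxInvSet A T'').image fun ij => (Equiv.swap k (k+1) ij.1, Equiv.swap k (k+1) ij.2)) := by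
  have hps1 : ∀ m, T'''.pos m = T''.pos (Equiv.swap k (k+1) m) := by
    intro m
    rcases eq_or_ne m k with h|h1
    · rw [h, Equiv.swap_apply_left]; exact hsw.1
    rcases eq_or_ne m (k+1) with h|h2
    · rw [h, Equiv.swap_apply_right]; exact hsw.2.1
    · rw [Equiv.swap_apply_of_ne_of_ne h1 h2]; exact hsw.2.2 m h1 h2
  have hps2 : ∀ m, T''.pos m = T'''.pos (Equiv.swap k (k+1) m) := by
    intro m
    rw [hps1 (Equiv.swap k (k+1) m), Equiv.swap_apply_self]
  ext ij
  constructor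
  · intro h
    rcases eq_or_ne ij (k, k+1) with h'|hne
    · rw [h']; exact Finset.mem_insert_self _ _
    · apply Finset.mem_insert_of_mem
      refine Finset.mem_image.2 ⟨(Equiv.swap k (k+1) ij.1, Equiv.swap k (k+1) ij.2),
        aux_invSet_swap_mem hk hk1 hps1 h hne, ?_⟩
      simp [Equiv.swap_apply_self]
  · intro h
    rcases Finset.mem_insert.1 h with h'|h'
    · rw [h']
      simp only [auxInvSet, Finset.mem_filter, Finset.mem_product]
      refine ⟨⟨hk, hk1⟩, lt_add_one k, ?_⟩
      rw [hsw.1, hsw.2.1]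
      exact hninv
    · obtain ⟨ij', hij', rfl⟩ := Finset.mem_image.1 h'
      apply aux_invSet_swap_mem hk hk1 hps2 hij'
      intro hcontra
      simp only [auxInvSet, Finset.mem_filter, Finset.mem_product] at hij'
      rw [hcontra] at hij'
      exact absurd hij'.2.2 (not_lt.2 (le_of_lt hninv))

lemma aux_wt_swap {k : ℕ} (hk : k ∈ A) (hk1 : k+1 ∈ A) {T'' T''' : SYT μ}
    (hsw : T''.IsSwapped T''' k) (hninv : (T''.pos k).2 < (T''.pos (k+1)).2) :
    auxWt A T''' = auxFac (T''.pos (k+1)) (T''.pos k) * auxWt A T'' := by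
  have hps1 : ∀ m, T'''.pos m = T''.pos (Equiv.swap k (k+1) m) := by
    intro m
    rcases eq_or_ne m k with h|h1
    · rw [h, Equiv.swap_apply_left]; exact hsw.1
    rcases eq_or_ne m (k+1) with h|h2
    · rw [h, Equiv.swap_apply_right]; exact hsw.2.1
    · rw [Equiv.swap_apply_of_ne_of_ne h1 h2]; exact hsw.2.2 m h1 h2
  have hnotmem : (k, k+1) ∉
      (auxInvSet A T'').image fun ij => (Equiv.swap k (k+1) ij.1, Equiv.swap k (k+1) ij.2) := by
    intro hmem
    obtain ⟨ij', hij', heq⟩ := Finset.mem_image.1 hmem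
    have h1 : ij'.1 = k + 1 := by
      have := congrArg Prod.fst heq
      simp only at this
      have := congrArg (Equiv.swap k (k+1)) this
      rwa [Equiv.swap_apply_self, Equiv.swap_apply_left] at this
    have h2 : ij'.2 = k := by
      have := congrArg Prod.snd heq
      simp only at this
      have := congrArg (Equiv.swap k (k+1)) this
      rwa [Equiv.swap_apply_self, Equiv.swap_apply_right] at this
    simp only [auxInvSet, Finset.mem_filter] at hij'
    omega
  unfold auxWt
  rw [aux_invSet_swap hk hk1 hsw hninv, Finset.prod_insert hnotmem,
    Finset.prod_image (by
      intro x hx y hy hxy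
      have h1 := congrArg Prod.fst hxy
      have h2 := congrArg Prod.snd hxy
      simp only at h1 h2
      exact Prod.ext ((Equiv.swap k (k+1)).injective h1) ((Equiv.swap k (k+1)).injective h2))]
  congr 1
  · rw [hps1 k, hps1 (k+1), Equiv.swap_apply_left, Equiv.swap_apply_right]
  · apply Finset.prod_congr rfl
    intro ij _
    have hps2 : ∀ m, T''.pos m = T'''.pos (Equiv.swap k (k+1) m) := fun m => by
      rw [hps1 (Equiv.swap k (k+1) m), Equiv.swap_apply_self]
    simp only
    rw [hps2 ij.1, hps2 ij.2]

end Part2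

section Part3

lemma aux_sqrt_eq {r : ℝ} (hr : 2 ≤ r) :
    Real.sqrt (1 - r⁻¹ ^ 2) = Real.sqrt ((r - 1) / (r + 1)) * ((r + 1) / r) := by
  have h0 : (0:ℝ) < r := by linarith
  have h1 : (0:ℝ) < r + 1 := by linarith
  have h : 1 - r⁻¹ ^ 2 = ((r - 1) / (r + 1)) * ((r + 1) / r) ^ 2 := by
    field_simp
    ring
  rw [h, Real.sqrt_mul (div_nonneg (by linarith) (by linarith)),
    Real.sqrt_sq (by positivity)]

lemma aux_key1 {r : ℝ} (hr : 2 ≤ r) :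
    r⁻¹ + Real.sqrt (1 - r⁻¹ ^ 2) * Real.sqrt ((r - 1) / (r + 1)) = 1 := by
  have h0 : (0:ℝ) < r := by linarith
  rw [aux_sqrt_eq hr]
  have hf : Real.sqrt ((r - 1) / (r + 1)) * Real.sqrt ((r - 1) / (r + 1)) = (r - 1) / (r + 1) :=
    Real.mul_self_sqrt (div_nonneg (by linarith) (by linarith))
  have h2 : Real.sqrt ((r-1)/(r+1)) * ((r + 1) / r) * Real.sqrt ((r-1)/(r+1))
      = ((r - 1) / (r + 1)) * ((r + 1) / r) := by
    rw [mul_right_comm, hf]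
  rw [h2]
  have h3 : (r - 1) / (r + 1) * ((r + 1) / r) = (r - 1) / r := by
    first
    | (field_simp; ring)
    | field_simp
  rw [h3]
  first
  | (field_simp; ring)
  | field_simp

lemma aux_key2 {r : ℝ} (hr : 2 ≤ r) :
    -r⁻¹ * Real.sqrt ((r - 1) / (r + 1)) + Real.sqrt (1 - r⁻¹ ^ 2)
      = Real.sqrt ((r - 1) / (r + 1)) := by
  have h0 : (0:ℝ) < r := by linarith
  rw [aux_sqrt_eq hr]
  have h2 : -r⁻¹ + (r + 1) / r = 1 := by
    first
    | (field_simp; ring)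
    | field_simp
  calc -r⁻¹ * Real.sqrt ((r-1)/(r+1)) + Real.sqrt ((r-1)/(r+1)) * ((r + 1) / r)
      = Real.sqrt ((r-1)/(r+1)) * (-r⁻¹ + (r + 1) / r) := by ring
    _ = _ := by rw [h2, mul_one]

/-- the adjacent transpositions with both entries in `[a, b]`. -/
def auxAdjGens (a b : ℕ) : Set (Equiv.Perm ℕ) :=
  {τ | ∃ k, a ≤ k ∧ k + 1 ≤ b ∧ τ = Equiv.swap k (k+1)}

lemma auxAdjGens_mono {a b b' : ℕ} (h : b ≤ b') : auxAdjGens a b ⊆ auxAdjGens a b' := by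
  rintro τ ⟨k, h1, h2, rfl⟩
  exact ⟨k, h1, by omega, rfl⟩

lemma aux_swap_mem_closure : ∀ (d a b i j : ℕ), j - i ≤ d → a ≤ i → i < j → j ≤ b →
    Equiv.swap i j ∈ Submonoid.closure (auxAdjGens a b) := by
  intro d
  induction d with
  | zero => intro a b i j h1 h2 h3 h4; omega
  | succ d ih =>
    intro a b i j h1 h2 h3 h4
    rcases eq_or_lt_of_le (Nat.succ_le_of_lt h3) with h|h
    · exact Submonoid.subset_closure ⟨i, h2, by omega, by rw [← h]⟩
    · have hg1 : Equiv.swap (i+1) j ∈ Submonoid.closure (auxAdjGens a b) :=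
        ih a b (i+1) j (by omega) (by omega) h h4
      have hg2 : Equiv.swap i (i+1) ∈ Submonoid.closure (auxAdjGens a b) :=
        Submonoid.subset_closure ⟨i, h2, by omega, rfl⟩
      have key : Equiv.swap (i+1) j * Equiv.swap i (i+1) * Equiv.swap (i+1) j
          = Equiv.swap i j := by
        rw [Equiv.swap_mul_swap_mul_swap (by omega : i ≠ i + 1) (by omega : i ≠ j)]
        exact Equiv.swap_comm j i
      rw [← key]
      exact mul_mem (mul_mem hg1 hg2) hg1

lemma aux_fix_one {a b : ℕ} {π : Equiv.Perm ℕ} (hba : b ≤ a)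
    (hfix : ∀ x, x ∉ Finset.Icc a b → π x = x) : π = 1 := by
  have ha : π a = a := by
    rcases eq_or_ne (π a) a with h|h
    · exact h
    · by_cases hI : π a ∈ Finset.Icc a b
      · simp only [Finset.mem_Icc] at hI; omega
      · have h2 := hfix (π a) hI
        exact absurd (π.injective h2) h
  ext x
  rcases eq_or_ne x a with rfl|h
  · exact ha
  · apply hfix
    simp only [Finset.mem_Icc]
    omega

lemma aux_perm_mem_closure : ∀ (n a b : ℕ) (π : Equiv.Perm ℕ), b ≤ a + n →
    (∀ x, x ∉ Finset.Icc a b → π x = x) → π ∈ Submonoid.closure (auxAdjGens a b) := by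
  intro n
  induction n with
  | zero =>
    intro a b π hb hfix
    rw [aux_fix_one (by omega) hfix]
    exact one_mem _
  | succ n ih =>
    intro a b π hb hfix
    rcases le_or_gt b a with hba|hab
    · rw [aux_fix_one hba hfix]; exact one_mem _
    · set j := π⁻¹ b with hj
      have hπj : π j = b := Equiv.apply_symm_apply π b
      have hjA : j ∈ Finset.Icc a b := by
        by_contra h
        have h2 := hfix j h
        rw [h2] at hπj
        rw [hπj] at h
        simp only [Finset.mem_Icc] at h
        omega
      set π' := π * Equiv.swap j b with hπ'
      have h1 : π' b = b := by
        rw [hπ', Equiv.Perm.mul_apply, Equiv.swap_apply_right]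
        exact hπj
      have h2 : ∀ x, x ∉ Finset.Icc a (b-1) → π' x = x := by
        intro x hx
        rcases eq_or_ne x b with rfl|hxb
        · exact h1
        · have hxI : x ∉ Finset.Icc a b := by
            simp only [Finset.mem_Icc] at hx ⊢
            omega
          have hxj : x ≠ j := by
            intro h'
            rw [h'] at hxI
            exact hxI hjA
          rw [hπ', Equiv.Perm.mul_apply, Equiv.swap_apply_of_ne_of_ne hxj hxb]
          exact hfix x hxI
      have h3 : π' ∈ Submonoid.closure (auxAdjGens a (b-1)) :=
        ih a (b-1) π' (by omega) h2
      have h4 : π' ∈ Submonoid.closure (auxAdjGens a b) :=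
        Submonoid.closure_mono (auxAdjGens_mono (by omega)) h3
      have h5 : Equiv.swap j b ∈ Submonoid.closure (auxAdjGens a b) := by
        rcases eq_or_ne j b with he|hne
        · rw [he, Equiv.swap_self]
          exact one_mem _
        · have hjb : j < b := by
            simp only [Finset.mem_Icc] at hjA
            omega
          have hja : a ≤ j := by
            simp only [Finset.mem_Icc] at hjA
            omega
          exact aux_swap_mem_closure b a b j b (by omega) hja hjb le_rfl
      have h6 : π = π' * Equiv.swap j b := by
        rw [hπ', mul_assoc, Equiv.swap_mul_self, mul_one]
      rw [h6]
      exact mul_mem h4 h5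

end Part3

/-- Let `A = {a, …, b}` be a set of consecutive integers occurring as entries of the
standard Young tableau `T`, such that no two elements of `A` lie in the same column of
`T` (the boxes of `A` form a horizontal strip). Then `Σ_{π ∈ S_A} λ(π)|T⟩ ≠ 0` in the
Young orthogonal representation, whose basis vectors `vec` are linearly independent. -/
theorem young_orthogonal_horizontal_nonzero {μ : YoungDiagram} {V : Type*}
    [AddCommGroup V] [Module ℝ V] (ρ : Equiv.Perm ℕ →* (V →ₗ[ℝ] V)) (vec : SYT μ → V)
    (hrules : YoungOrthogonalRules ρ vec) (hli : LinearIndependent ℝ vec)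
    (T : SYT μ) (a b : ℕ) (A : Finset ℕ) (hA : A = Finset.Icc a b)
    (hsub : ∀ x ∈ A, x < μ.card)
    (hstrip : ∀ x ∈ A, ∀ y ∈ A, (T.pos x).2 = (T.pos y).2 → x = y) :
    ∑ σ : Equiv.Perm {x : ℕ // x ∈ A},
      ρ (σ.extendDomain (Equiv.refl {x : ℕ // x ∈ A})) (vec T) ≠ 0 := by
  classical
  have step : ∀ k, k ∈ A → k + 1 ∈ A → ∀ T'' : SYT μ, SYTGood T A T'' →
      ∃ (c1 c2 : ℝ) (T3 : SYT μ), SYTGood T A T3 ∧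
        ρ (Equiv.swap k (k+1)) (vec T'') = c1 • vec T'' + c2 • vec T3 ∧
        c1 * auxWt A T'' + c2 * auxWt A T3 = auxWt A T'' := by
    intro k hk hk1 T'' hG
    have hkc : k + 1 < μ.card := hsub _ hk1
    have hnc : ¬ T''.sameCol k := aux_good_col_ne hsub hstrip hG hk hk1 (by omega)
    by_cases hr : T''.sameRow k
    · refine ⟨1, 0, T'', hG, ?_, by ring⟩
      rw [(hrules T'' k hkc).1 hr, one_smul, zero_smul, add_zero]
    · set T3 := T''.swapped k hkc hr hnc with hT3
      have hsw : T''.IsSwapped T3 k := T''.swapped_isSwapped k hkc hr hnc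
      have hG3 : SYTGood T A T3 := by
        intro m hm
        rw [hsw.2.2 m (fun h => hm (h ▸ hk)) (fun h => hm (h ▸ hk1))]
        exact hG m hm
      have hrule := (hrules T'' k hkc).2.2 hr hnc T3 hsw
      refine ⟨T''.aCoef k, T''.bCoef k, T3, hG3, hrule, ?_⟩
      rcases lt_or_gt_of_ne (fun h => hnc h) with hlt|hgt
      · -- entry k lies strictly to the left of entry k+1
        have hd : 2 ≤ T''.axialDist k := aux_adj_dist hA hsub hstrip hG hk hk1 hr hlt
        have hwt : auxWt A T3 = auxFac (T''.pos (k+1)) (T''.pos k) * auxWt A T'' :=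
          aux_wt_swap hk hk1 hsw hlt
        have hDzeq : auxDz (T''.pos (k+1)) (T''.pos k) = T''.axialDist k := by
          unfold auxDz SYT.axialDist; ring
        have hr2 : (2:ℝ) ≤ ((T''.axialDist k : ℤ) : ℝ) := by exact_mod_cast hd
        have hfac : auxFac (T''.pos (k+1)) (T''.pos k)
            = Real.sqrt ((((T''.axialDist k : ℤ) : ℝ) - 1) / (((T''.axialDist k : ℤ) : ℝ) + 1)) := by
          unfold auxFac; rw [hDzeq]
        have ha : T''.aCoef k = (((T''.axialDist k : ℤ) : ℝ))⁻¹ := rfl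
        have hb : T''.bCoef k = Real.sqrt (1 - ((((T''.axialDist k : ℤ) : ℝ))⁻¹)^2) := by
          unfold SYT.bCoef; rw [ha]
        rw [hwt, hfac, ha, hb]
        linear_combination (auxWt A T'') * aux_key1 hr2
      · -- entry k lies strictly to the right of entry k+1
        have hsw' : T3.IsSwapped T'' k :=
          ⟨hsw.2.1.symm, hsw.1.symm, fun m h1 h2 => (hsw.2.2 m h1 h2).symm⟩
        have hlt3 : (T3.pos k).2 < (T3.pos (k+1)).2 := by rw [hsw.1, hsw.2.1]; exact hgt
        have hwt : auxWt A T'' = auxFac (T3.pos (k+1)) (T3.pos k) * auxWt A T3 :=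
          aux_wt_swap hk hk1 hsw' hlt3
        have hD : 2 ≤ auxDz (T''.pos k) (T''.pos (k+1)) :=
          aux_inv_dist hA hsub hstrip hG hk hk1 (lt_add_one k) hgt
        have hr2 : (2:ℝ) ≤ ((auxDz (T''.pos k) (T''.pos (k+1)) : ℤ) : ℝ) := by exact_mod_cast hD
        have hfac : auxFac (T3.pos (k+1)) (T3.pos k)
            = Real.sqrt ((((auxDz (T''.pos k) (T''.pos (k+1)) : ℤ) : ℝ) - 1)
              / (((auxDz (T''.pos k) (T''.pos (k+1)) : ℤ) : ℝ) + 1)) := by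
          rw [hsw.2.1, hsw.1]; rfl
        have haxial : T''.axialDist k = -(auxDz (T''.pos k) (T''.pos (k+1))) := by
          unfold auxDz SYT.axialDist; ring
        have ha : T''.aCoef k = -(((auxDz (T''.pos k) (T''.pos (k+1)) : ℤ) : ℝ))⁻¹ := by
          unfold SYT.aCoef; rw [haxial]; push_cast; rw [inv_neg]
        have hb : T''.bCoef k
            = Real.sqrt (1 - ((((auxDz (T''.pos k) (T''.pos (k+1)) : ℤ) : ℝ))⁻¹)^2) := by
          unfold SYT.bCoef; rw [ha]; congr 1; ring
        rw [hwt, hfac, ha, hb]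
        linear_combination (auxWt A T3) * aux_key2 hr2
  have hTGood : SYTGood T A T := fun m _ => rfl
  obtain ⟨φ, hφ⟩ := LinearMap.exists_extend
    ((Module.Basis.span hli).constr ℝ (fun T'' : SYT μ => auxWt A T''))
  have hφv : ∀ T'' : SYT μ, φ (vec T'') = auxWt A T'' := by
    intro T''
    have h1 : vec T'' = ((Module.Basis.span hli) T'' : V) := (congrArg Subtype.val (Module.Basis.span_apply hli T'')).symm
    rw [h1]
    have h2 := LinearMap.congr_fun hφ ((Module.Basis.span hli) T'')
    simp only [LinearMap.comp_apply, Submodule.coe_subtype] at h2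
    rw [h2, Module.Basis.constr_basis]
  have stepM : ∀ k, k ∈ A → k+1 ∈ A →
      ∀ x ∈ Submodule.span ℝ (vec '' {T'' : SYT μ | SYTGood T A T''}),
      ρ (Equiv.swap k (k+1)) x ∈ Submodule.span ℝ (vec '' {T'' : SYT μ | SYTGood T A T''}) ∧
      φ (ρ (Equiv.swap k (k+1)) x) = φ x := by
    intro k hk hk1
    have hmem : ∀ x ∈ Submodule.span ℝ (vec '' {T'' : SYT μ | SYTGood T A T''}),
        ρ (Equiv.swap k (k+1)) x ∈ Submodule.span ℝ (vec '' {T'' : SYT μ | SYTGood T A T''}) := by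
      intro x hx
      induction hx using Submodule.span_induction with
      | mem y hy =>
        obtain ⟨T'', hT'', rfl⟩ := hy
        obtain ⟨c1, c2, T3, hG3, heq, -⟩ := step k hk hk1 T'' hT''
        rw [heq]
        exact Submodule.add_mem _ (Submodule.smul_mem _ _ (Submodule.subset_span
          (Set.mem_image_of_mem _ hT''))) (Submodule.smul_mem _ _ (Submodule.subset_span
          (Set.mem_image_of_mem _ hG3)))
      | zero => rw [map_zero]; exact Submodule.zero_mem _
      | add u v hu hv hu' hv' => rw [map_add]; exact Submodule.add_mem _ hu' hv'
      | smul c u hu hu' => rw [map_smul]; exact Submodule.smul_mem _ _ hu'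
    have hker : Submodule.span ℝ (vec '' {T'' : SYT μ | SYTGood T A T''}) ≤
        LinearMap.ker ((φ.comp (ρ (Equiv.swap k (k+1)))) - φ) := by
      apply Submodule.span_le.2
      rintro y ⟨T'', hT'', rfl⟩
      obtain ⟨c1, c2, T3, hG3, heq, hnum⟩ := step k hk hk1 T'' hT''
      simp only [SetLike.mem_coe, LinearMap.mem_ker, LinearMap.sub_apply, LinearMap.comp_apply]
      rw [heq, map_add, map_smul, map_smul, hφv, hφv]
      simp only [smul_eq_mul]
      linarith [hnum]
    intro x hx
    refine ⟨hmem x hx, ?_⟩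
    have h3 := hker hx
    rw [LinearMap.mem_ker, LinearMap.sub_apply, LinearMap.comp_apply, sub_eq_zero] at h3
    exact h3
  let N : Submonoid (Equiv.Perm ℕ) :=
    { carrier := {π : Equiv.Perm ℕ |
        ∀ x ∈ Submodule.span ℝ (vec '' {T'' : SYT μ | SYTGood T A T''}),
        ρ π x ∈ Submodule.span ℝ (vec '' {T'' : SYT μ | SYTGood T A T''}) ∧ φ (ρ π x) = φ x}
      one_mem' := by
        intro x hx
        rw [map_one]
        simp only [Module.End.one_apply]
        exact ⟨hx, trivial⟩
      mul_mem' := by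
        intro p q hp hq x hx
        rw [map_mul, Module.End.mul_apply]
        obtain ⟨h1, h2⟩ := hq x hx
        obtain ⟨h3, h4⟩ := hp _ h1
        exact ⟨h3, h4.trans h2⟩ }
  have hgens : auxAdjGens a b ⊆ ↑N := by
    rintro τ ⟨k, hka, hkb, rfl⟩
    have hk : k ∈ A := by rw [hA]; simp only [Finset.mem_Icc]; omega
    have hk1 : k+1 ∈ A := by rw [hA]; simp only [Finset.mem_Icc]; omega
    exact fun x hx => stepM k hk hk1 x hx
  have hclos : Submonoid.closure (auxAdjGens a b) ≤ N := Submonoid.closure_le.2 hgens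
  intro hzero
  have hTM : vec T ∈ Submodule.span ℝ (vec '' {T'' : SYT μ | SYTGood T A T''}) :=
    Submodule.subset_span (Set.mem_image_of_mem _ hTGood)
  have hterm : ∀ σ : Equiv.Perm {x : ℕ // x ∈ A},
      φ (ρ (σ.extendDomain (Equiv.refl {x : ℕ // x ∈ A})) (vec T)) = auxWt A T := by
    intro σ
    have hfix : ∀ x, x ∉ Finset.Icc a b →
        σ.extendDomain (Equiv.refl {x : ℕ // x ∈ A}) x = x := by
      intro x hx
      apply Equiv.Perm.extendDomain_apply_not_subtype
      rw [← hA] at hx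
      exact hx
    have hmem : σ.extendDomain (Equiv.refl {x : ℕ // x ∈ A}) ∈
        Submonoid.closure (auxAdjGens a b) :=
      aux_perm_mem_closure b a b _ (by omega) hfix
    have h5 := hclos hmem (vec T) hTM
    rw [h5.2, hφv]
  have h0 : φ (∑ σ : Equiv.Perm {x : ℕ // x ∈ A},
      ρ (σ.extendDomain (Equiv.refl {x : ℕ // x ∈ A})) (vec T)) = 0 := by
    rw [hzero, map_zero]
  rw [map_sum, Finset.sum_congr rfl (fun σ _ => hterm σ), Finset.sum_const, nsmul_eq_mul] at h0
  have hw : 0 < auxWt A T := by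
    unfold auxWt
    apply Finset.prod_pos
    intro ij hij
    simp only [auxInvSet, Finset.mem_filter, Finset.mem_product] at hij
    obtain ⟨⟨hiA, hjA⟩, hlt, hcol⟩ := hij
    have hD := aux_inv_dist hA hsub hstrip hTGood hiA hjA hlt hcol
    have hD' : (2:ℝ) ≤ ((auxDz (T.pos ij.1) (T.pos ij.2) : ℤ) : ℝ) := by exact_mod_cast hD
    unfold auxFac
    apply Real.sqrt_pos.2
    apply div_pos <;> linarith
  have hcard : 0 < (Finset.univ : Finset (Equiv.Perm {x : ℕ // x ∈ A})).card :=
    Finset.card_pos.2 ⟨1, Finset.mem_univ 1⟩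
  have hpos : (0:ℝ) < ((Finset.univ : Finset (Equiv.Perm {x : ℕ // x ∈ A})).card : ℝ)
      * auxWt A T := mul_pos (by exact_mod_cast hcard) hw
  exact absurd h0 (ne_of_gt hpos)
end

section
/- The total dimension identity of Schur-Weyl duality: d^n = Σ_λ s_λ(d) · f^λ, where the sum runs over partitions λ of n with at most d parts, f^λ is the number of standard Young tableaux of shape λ, and s_λ(d) is the number of semistandard Young tableaux of shape λ with entries in {1,…,d}. -/
/-- The number `s_λ(d)` of semistandard Young tableaux of shape `λ` with entries in
`{1, …, d}` (here encoded with `0`-indexed entries, i.e. entries in `{0, …, d-1}`). -/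
noncomputable def ssytCount (d : ℕ) (lam : YoungDiagram) : ℕ :=
  Nat.card {T : SemistandardYoungTableau lam // ∀ i j : ℕ, (i, j) ∈ lam → T i j < d}

/-- A standard Young tableau of shape `λ` with `n = λ.card` boxes, encoded as a bijection
`Fin n ≃ cells of λ` whose entries strictly increase along rows and columns. -/
def IsStandard {lam : YoungDiagram} {n : ℕ} (T : Fin n ≃ {c : ℕ × ℕ // c ∈ lam.cells}) :
    Prop :=
  (∀ a b : Fin n, ((T a : ℕ × ℕ)).1 = ((T b : ℕ × ℕ)).1 →
      ((T a : ℕ × ℕ)).2 < ((T b : ℕ × ℕ)).2 → a < b) ∧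
  (∀ a b : Fin n, ((T a : ℕ × ℕ)).2 = ((T b : ℕ × ℕ)).2 →
      ((T a : ℕ × ℕ)).1 < ((T b : ℕ × ℕ)).1 → a < b)

/-- The number `f^λ` of standard Young tableaux of shape `λ`, where `n = λ.card`. -/
noncomputable def sytCount (n : ℕ) (lam : YoungDiagram) : ℕ :=
  Nat.card {T : Fin n ≃ {c : ℕ × ℕ // c ∈ lam.cells} // IsStandard T}

namespace SWD


open YoungDiagram

/-- `c` is a removable corner of `μ`. -/
def IsCorner (mu : YoungDiagram) (c : ℕ × ℕ) : Prop :=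
  c ∈ mu ∧ (c.1 + 1, c.2) ∉ mu ∧ (c.1, c.2 + 1) ∉ mu

/-- `c` is an addable corner of `μ`. -/
def IsAddable (mu : YoungDiagram) (c : ℕ × ℕ) : Prop :=
  c ∉ mu ∧ (c.1 = 0 ∨ (c.1 - 1, c.2) ∈ mu) ∧ (c.2 = 0 ∨ (c.1, c.2 - 1) ∈ mu)

instance (mu : YoungDiagram) (c : ℕ × ℕ) : Decidable (IsCorner mu c) := by
  unfold IsCorner; infer_instance

instance (mu : YoungDiagram) (c : ℕ × ℕ) : Decidable (IsAddable mu c) := by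
  unfold IsAddable; infer_instance

theorem erase_lowerSet {mu : YoungDiagram} {c : ℕ × ℕ} (h : IsCorner mu c) :
    IsLowerSet (↑(mu.cells.erase c) : Set (ℕ × ℕ)) := by
  obtain ⟨c1, c2⟩ := c
  intro y x hxy hy
  obtain ⟨y1, y2⟩ := y
  obtain ⟨x1, x2⟩ := x
  rw [Prod.mk_le_mk] at hxy
  simp only [Finset.coe_erase, Set.mem_diff, Finset.mem_coe, mem_cells,
    Set.mem_singleton_iff] at hy ⊢
  refine ⟨mu.isLowerSet (Prod.mk_le_mk.mpr hxy) hy.1, ?_⟩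
  intro heq
  rw [Prod.mk.injEq] at heq
  obtain ⟨rfl, rfl⟩ := heq
  rcases Nat.lt_or_ge x1 y1 with hlt | hge
  · exact h.2.1 (mu.up_left_mem hlt hxy.2 hy.1)
  · rcases Nat.lt_or_ge x2 y2 with hlt2 | hge2
    · exact h.2.2 (mu.up_left_mem hxy.1 hlt2 hy.1)
    · exact hy.2 (by rw [Prod.mk.injEq]; constructor <;> omega)

theorem insert_lowerSet {mu : YoungDiagram} {c : ℕ × ℕ} (h : IsAddable mu c) :
    IsLowerSet (↑(insert c mu.cells) : Set (ℕ × ℕ)) := by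
  obtain ⟨c1, c2⟩ := c
  intro y x hxy hy
  obtain ⟨y1, y2⟩ := y
  obtain ⟨x1, x2⟩ := x
  rw [Prod.mk_le_mk] at hxy
  simp only [Finset.coe_insert, Set.mem_insert_iff, Finset.mem_coe, mem_cells] at hy ⊢
  rcases hy with heq | hy
  · rw [Prod.mk.injEq] at heq
    obtain ⟨rfl, rfl⟩ := heq
    by_cases hxc : (x1, x2) = (y1, y2)
    · exact Or.inl hxc
    · right
      rw [Prod.mk.injEq] at hxc
      rcases Nat.lt_or_ge x1 y1 with hlt | hge
      · rcases h.2.1 with h0 | hmem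
        · simp only at h0; omega
        · exact mu.up_left_mem (by simp only; omega) hxy.2 hmem
      · rcases Nat.lt_or_ge x2 y2 with hlt2 | hge2
        · rcases h.2.2 with h0 | hmem
          · simp only at h0; omega
          · exact mu.up_left_mem hxy.1 (by simp only; omega) hmem
        · exact absurd (by constructor <;> omega : x1 = y1 ∧ x2 = y2) (by rwa [not_and] at hxc ⊢)
  · exact Or.inr (mu.isLowerSet (Prod.mk_le_mk.mpr hxy) hy)

/-- Remove a corner cell (total function; identity if not a corner). -/
def delBox (mu : YoungDiagram) (c : ℕ × ℕ) : YoungDiagram :=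
  if h : IsCorner mu c then ⟨mu.cells.erase c, erase_lowerSet h⟩ else mu

/-- Add a cell at an addable corner (total function; identity if not addable). -/
def addBox (mu : YoungDiagram) (c : ℕ × ℕ) : YoungDiagram :=
  if h : IsAddable mu c then ⟨insert c mu.cells, insert_lowerSet h⟩ else mu

theorem mem_delBox {mu : YoungDiagram} {c : ℕ × ℕ} (h : IsCorner mu c) (x : ℕ × ℕ) :
    x ∈ delBox mu c ↔ x ∈ mu ∧ x ≠ c := by
  simp only [delBox, dif_pos h]
  simp [Finset.mem_erase, and_comm]

theorem mem_addBox {mu : YoungDiagram} {c : ℕ × ℕ} (h : IsAddable mu c) (x : ℕ × ℕ) :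
    x ∈ addBox mu c ↔ x = c ∨ x ∈ mu := by
  simp only [addBox, dif_pos h]
  simp [Finset.mem_insert]

theorem delBox_card {mu : YoungDiagram} {c : ℕ × ℕ} (h : IsCorner mu c) :
    (delBox mu c).card = mu.card - 1 := by
  simp only [delBox, dif_pos h, YoungDiagram.card]
  exact Finset.card_erase_of_mem h.1

theorem addBox_card {mu : YoungDiagram} {c : ℕ × ℕ} (h : IsAddable mu c) :
    (addBox mu c).card = mu.card + 1 := by
  simp only [addBox, dif_pos h, YoungDiagram.card]
  exact Finset.card_insert_of_notMem h.1

theorem isAddable_delBox {mu : YoungDiagram} {c : ℕ × ℕ} (h : IsCorner mu c) :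
    IsAddable (delBox mu c) c := by
  refine ⟨by simp [mem_delBox h], ?_, ?_⟩
  · rcases Nat.eq_zero_or_pos c.1 with h0 | hpos
    · exact Or.inl h0
    · refine Or.inr ?_
      rw [mem_delBox h]
      refine ⟨mu.up_left_mem (by omega) le_rfl h.1, ?_⟩
      intro hcontra
      have := congrArg Prod.fst hcontra
      simp at this; omega
  · rcases Nat.eq_zero_or_pos c.2 with h0 | hpos
    · exact Or.inl h0
    · refine Or.inr ?_
      rw [mem_delBox h]
      refine ⟨mu.up_left_mem le_rfl (by omega) h.1, ?_⟩
      intro hcontra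
      have := congrArg Prod.snd hcontra
      simp at this; omega

theorem isCorner_addBox {mu : YoungDiagram} {c : ℕ × ℕ} (h : IsAddable mu c) :
    IsCorner (addBox mu c) c := by
  refine ⟨by simp [mem_addBox h], ?_, ?_⟩
  · rw [mem_addBox h]
    rintro (hc | hc)
    · have := congrArg Prod.fst hc; simp at this
    · exact h.1 (mu.up_left_mem (Nat.le_succ _) le_rfl hc)
  · rw [mem_addBox h]
    rintro (hc | hc)
    · have := congrArg Prod.snd hc; simp at this
    · exact h.1 (mu.up_left_mem le_rfl (Nat.le_succ _) hc)

theorem addBox_delBox {mu : YoungDiagram} {c : ℕ × ℕ} (h : IsCorner mu c) :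
    addBox (delBox mu c) c = mu := by
  have h2 := isAddable_delBox h
  simp only [delBox, dif_pos h] at h2
  apply YoungDiagram.ext
  simp only [addBox, delBox, dif_pos h, dif_pos h2]
  exact Finset.insert_erase h.1

theorem delBox_addBox {mu : YoungDiagram} {c : ℕ × ℕ} (h : IsAddable mu c) :
    delBox (addBox mu c) c = mu := by
  have h2 := isCorner_addBox h
  simp only [addBox, dif_pos h] at h2
  apply YoungDiagram.ext
  simp only [delBox, addBox, dif_pos h, dif_pos h2]
  exact Finset.erase_insert h.1

theorem colLen_le_of_le {mu nu : YoungDiagram} (h : ∀ x, x ∈ mu → x ∈ nu) (j : ℕ) :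
    mu.colLen j ≤ nu.colLen j := by
  by_contra hcon
  push_neg at hcon
  have : (nu.colLen j, j) ∈ mu := mem_iff_lt_colLen.2 hcon
  exact absurd (mem_iff_lt_colLen.1 (h _ this)) (lt_irrefl _)

/-- Every addable corner has the form `(i, rowLen i)` with `i ≤ colLen 0`. -/
theorem isAddable_eq_rowLen {mu : YoungDiagram} {c : ℕ × ℕ} (h : IsAddable mu c) :
    c.2 = mu.rowLen c.1 ∧ c.1 ≤ mu.colLen 0 := by
  obtain ⟨c1, c2⟩ := c
  obtain ⟨hnm, h1, h2⟩ := h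
  constructor
  · show c2 = mu.rowLen c1
    have hnot : ¬ c2 < mu.rowLen c1 := fun hc => hnm (mem_iff_lt_rowLen.2 hc)
    rcases h2 with h0 | hmem
    · simp only at h0; omega
    · have hlt : c2 - 1 < mu.rowLen c1 := mem_iff_lt_rowLen.1 hmem
      have hne : c2 ≠ 0 := by rintro rfl; exact hnm hmem
      omega
  · show c1 ≤ mu.colLen 0
    rcases h1 with h0 | hmem
    · simp only at h0; omega
    · have hlt : c1 - 1 < mu.colLen c2 := mem_iff_lt_colLen.1 hmem
      have hle : mu.colLen c2 ≤ mu.colLen 0 := mu.colLen_anti 0 c2 (Nat.zero_le _)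
      have hne : c1 ≠ 0 := by rintro rfl; exact hnm hmem
      omega

/-- The finset of addable corners of `μ`. -/
def addables (mu : YoungDiagram) : Finset (ℕ × ℕ) :=
  ((Finset.range (mu.colLen 0 + 1)).image fun i => (i, mu.rowLen i)).filter
    fun c => IsAddable mu c

theorem mem_addables {mu : YoungDiagram} {c : ℕ × ℕ} :
    c ∈ addables mu ↔ IsAddable mu c := by
  simp only [addables, Finset.mem_filter, Finset.mem_image, Finset.mem_range]
  constructor
  · rintro ⟨-, h⟩; exact h
  · intro h
    obtain ⟨h1, h2⟩ := isAddable_eq_rowLen h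
    exact ⟨⟨c.1, by omega, by rw [← h1]⟩, h⟩

/-- The finset of removable corners of `μ`. -/
def corners (mu : YoungDiagram) : Finset (ℕ × ℕ) :=
  mu.cells.filter fun c => IsCorner mu c

theorem mem_corners {mu : YoungDiagram} {c : ℕ × ℕ} :
    c ∈ corners mu ↔ IsCorner mu c := by
  simp only [corners, Finset.mem_filter, mem_cells]
  exact ⟨fun h => h.2, fun h => ⟨h.1, h⟩⟩


/-! ### SSYT helpers -/

/-- Build an SSYT from adjacent conditions. -/
def mkSSYT (mu : YoungDiagram) (f : ℕ → ℕ → ℕ)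
    (hrow : ∀ i j, (i, j + 1) ∈ mu → f i j ≤ f i (j + 1))
    (hcol : ∀ i j, (i + 1, j) ∈ mu → f i j < f (i + 1) j)
    (hzero : ∀ i j, (i, j) ∉ mu → f i j = 0) : SemistandardYoungTableau mu where
  entry := f
  row_weak' := by
    intro i j1 j2 hj hc
    have key : ∀ m j, (i, j + m + 1) ∈ mu → f i j ≤ f i (j + m + 1) := by
      intro m
      induction m with
      | zero => intro j h; exact hrow i j h
      | succ m ih =>
        intro j h
        have hmem : (i, j + m + 1) ∈ mu := mu.up_left_mem le_rfl (by omega) h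
        have h2 : (i, (j + m + 1) + 1) ∈ mu := by
          have : j + (m + 1) + 1 = (j + m + 1) + 1 := by omega
          rwa [this] at h
        calc f i j ≤ f i (j + m + 1) := ih j hmem
          _ ≤ f i ((j + m + 1) + 1) := hrow i (j + m + 1) h2
          _ = f i (j + (m + 1) + 1) := rfl
    obtain ⟨m, rfl⟩ : ∃ m, j2 = j1 + m + 1 := ⟨j2 - j1 - 1, by omega⟩
    exact key m j1 hc
  col_strict' := by
    intro i1 i2 j hi hc
    have key : ∀ m i, (i + m + 1, j) ∈ mu → f i j < f (i + m + 1) j := by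
      intro m
      induction m with
      | zero => intro i h; exact hcol i j h
      | succ m ih =>
        intro i h
        have hmem : (i + m + 1, j) ∈ mu := mu.up_left_mem (by omega) le_rfl h
        have h2 : ((i + m + 1) + 1, j) ∈ mu := by
          have : i + (m + 1) + 1 = (i + m + 1) + 1 := by omega
          rwa [this] at h
        calc f i j < f (i + m + 1) j := ih i hmem
          _ < f ((i + m + 1) + 1) j := hcol (i + m + 1) j h2
          _ = f (i + (m + 1) + 1) j := rfl
    obtain ⟨m, rfl⟩ : ∃ m, i2 = i1 + m + 1 := ⟨i2 - i1 - 1, by omega⟩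
    exact key m i1 hc
  zeros' := by intro i j h; exact hzero i j h

@[simp]
theorem mkSSYT_entry (mu : YoungDiagram) (f : ℕ → ℕ → ℕ) (h1 h2 h3) (i j : ℕ) :
    (mkSSYT mu f h1 h2 h3) i j = f i j := rfl

/-- The bounded-entry SSYT subtype. -/
abbrev BddSSYT (d : ℕ) (lam : YoungDiagram) :=
  {T : SemistandardYoungTableau lam // ∀ i j : ℕ, (i, j) ∈ lam → T i j < d}

instance bddSSYT_finite (d : ℕ) (lam : YoungDiagram) : Finite (BddSSYT d lam) := by
  apply Finite.of_injective
    (fun T => (fun c => (⟨T.1 c.1.1 c.1.2, T.2 c.1.1 c.1.2 (by exact c.2)⟩ : Fin d) :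
      {c : ℕ × ℕ // c ∈ lam.cells} → Fin d))
  intro T T' h
  apply Subtype.ext
  apply SemistandardYoungTableau.ext
  intro i j
  by_cases hmem : (i, j) ∈ lam
  · have := congrFun h ⟨(i, j), hmem⟩
    exact congrArg Fin.val this
  · rw [T.1.zeros hmem, T'.1.zeros hmem]

theorem ssytCount_eq_card (d : ℕ) (lam : YoungDiagram) :
    ssytCount d lam = Nat.card (BddSSYT d lam) := rfl

theorem ssytCount_eq_zero (d : ℕ) (lam : YoungDiagram) (h : d < lam.colLen 0) :
    ssytCount d lam = 0 := by
  rw [ssytCount]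
  rw [Nat.card_eq_zero]
  left
  constructor
  rintro ⟨T, hT⟩
  have key : ∀ i, (i, 0) ∈ lam → i ≤ T i 0 := by
    intro i
    induction i with
    | zero => intro _; exact Nat.zero_le _
    | succ i ih =>
      intro h
      have h1 : (i, 0) ∈ lam := lam.up_left_mem (Nat.le_succ _) le_rfl h
      have hcs : T i 0 < T (i + 1) 0 := T.col_strict (Nat.lt_succ_self i) h
      have := ih h1
      omega
  have hd : (d, 0) ∈ lam := YoungDiagram.mem_iff_lt_colLen.2 h
  have := key d hd
  have := hT d 0 hd
  omega

/-- The empty tableau. -/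
def botSSYT : SemistandardYoungTableau (⊥ : YoungDiagram) :=
  ⟨fun _ _ => 0, by intro i j1 j2 _ h; exact absurd h (YoungDiagram.notMem_bot _),
    by intro i1 i2 j _ h; exact absurd h (YoungDiagram.notMem_bot _), by intros; rfl⟩

theorem ssytCount_bot (d : ℕ) : ssytCount d ⊥ = 1 := by
  rw [ssytCount]
  haveI : Unique {T : SemistandardYoungTableau (⊥ : YoungDiagram) //
      ∀ i j : ℕ, (i, j) ∈ (⊥ : YoungDiagram) → T i j < d} := by
    refine ⟨⟨⟨botSSYT, fun i j h => absurd h (YoungDiagram.notMem_bot _)⟩⟩, ?_⟩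
    rintro ⟨T, hT⟩
    apply Subtype.ext
    apply SemistandardYoungTableau.ext
    intro i j
    rw [T.zeros (YoungDiagram.notMem_bot _)]
    rfl
  exact Nat.card_unique

theorem sytCount_bot : sytCount 0 ⊥ = 1 := by
  rw [sytCount]
  haveI hempty : IsEmpty {c : ℕ × ℕ // c ∈ (⊥ : YoungDiagram).cells} :=
    ⟨fun x => (YoungDiagram.notMem_bot _) x.2⟩
  have e : Fin 0 ≃ {c : ℕ × ℕ // c ∈ (⊥ : YoungDiagram).cells} := Equiv.equivOfIsEmpty _ _
  haveI : Unique {T : Fin 0 ≃ {c : ℕ × ℕ // c ∈ (⊥ : YoungDiagram).cells} // IsStandard T} := by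
    refine ⟨⟨⟨e, ⟨fun a => a.elim0, fun a => a.elim0⟩⟩⟩, ?_⟩
    rintro ⟨T, hT⟩
    apply Subtype.ext
    apply Equiv.ext
    intro a
    exact a.elim0
  exact Nat.card_unique



/-! ### Forward row insertion -/

section Insertion

variable (lam : YoungDiagram) (f : ℕ → ℕ → ℕ) (x : ℕ)

theorem bump_ex (i y : ℕ) : ∃ j, (i, j) ∉ lam ∨ y < f i j :=
  ⟨lam.rowLen i, Or.inl (by rw [YoungDiagram.mem_iff_lt_rowLen]; omega)⟩

/-- The column where a value `y` gets inserted in row `i`. -/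
noncomputable def bcol (i y : ℕ) : ℕ := Nat.find (bump_ex lam f i y)

/-- The sequence of values inserted along the bumping path, starting from `x`. -/
noncomputable def xsq : ℕ → ℕ
  | 0 => x
  | i + 1 => f i (bcol lam f i (xsq i))

/-- The columns of the bumping path. -/
noncomputable def jsq (i : ℕ) : ℕ := bcol lam f i (xsq lam f x i)

theorem xsq_succ (i : ℕ) : xsq lam f x (i + 1) = f i (jsq lam f x i) := rfl

theorem kstop_ex : ∃ i, (i, jsq lam f x i) ∉ lam :=
  ⟨lam.colLen 0, fun hmem => by
    have h1 := YoungDiagram.mem_iff_lt_colLen.1 hmem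
    have h2 := lam.colLen_anti 0 (jsq lam f x (lam.colLen 0)) (Nat.zero_le _)
    omega⟩

/-- The terminal row of the bumping path. -/
noncomputable def kst : ℕ := Nat.find (kstop_ex lam f x)

/-- The entries after inserting `x` into `f`. -/
noncomputable def newE : ℕ → ℕ → ℕ := fun a b =>
  if a ≤ kst lam f x ∧ b = jsq lam f x a then xsq lam f x a else f a b

theorem bcol_le {i y J : ℕ} (h : (i, J) ∉ lam ∨ y < f i J) : bcol lam f i y ≤ J :=
  Nat.find_min' _ h

theorem bcol_min {i y j : ℕ} (h : j < bcol lam f i y) : (i, j) ∈ lam ∧ f i j ≤ y := by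
  have h2 := Nat.find_min (bump_ex lam f i y) h
  push_neg at h2
  exact ⟨h2.1, h2.2⟩

theorem bcol_spec {i y : ℕ} (h : (i, bcol lam f i y) ∈ lam) : y < f i (bcol lam f i y) :=
  (Nat.find_spec (bump_ex lam f i y)).resolve_left (not_not_intro h)

theorem jsq_mem {i : ℕ} (h : i < kst lam f x) : (i, jsq lam f x i) ∈ lam :=
  not_not.1 (Nat.find_min (kstop_ex lam f x) h)

theorem kst_spec : (kst lam f x, jsq lam f x (kst lam f x)) ∉ lam :=
  Nat.find_spec (kstop_ex lam f x)

theorem kst_le {i : ℕ} (h : (i, jsq lam f x i) ∉ lam) : kst lam f x ≤ i :=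
  Nat.find_min' _ h

theorem jsq_le {i J : ℕ} (h : (i, J) ∉ lam ∨ xsq lam f x i < f i J) : jsq lam f x i ≤ J :=
  Nat.find_min' _ h

theorem jsq_min {i j : ℕ} (h : j < jsq lam f x i) : (i, j) ∈ lam ∧ f i j ≤ xsq lam f x i :=
  bcol_min lam f h

theorem jsq_spec {i : ℕ} (h : (i, jsq lam f x i) ∈ lam) : xsq lam f x i < f i (jsq lam f x i) :=
  bcol_spec lam f h

theorem newE_pos {a b : ℕ} (h1 : a ≤ kst lam f x) (h2 : b = jsq lam f x a) :
    newE lam f x a b = xsq lam f x a := by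
  simp only [newE]
  rw [if_pos ⟨h1, h2⟩]

theorem newE_neg {a b : ℕ} (h : ¬(a ≤ kst lam f x ∧ b = jsq lam f x a)) :
    newE lam f x a b = f a b := by
  simp only [newE]
  rw [if_neg h]

end Insertion

section InsertionSSYT

variable (lam : YoungDiagram) (T : SemistandardYoungTableau lam) (x : ℕ)

theorem jsq_succ_le {i : ℕ} (h : i < kst lam (⇑T) x) :
    jsq lam (⇑T) x (i + 1) ≤ jsq lam (⇑T) x i := by
  apply bcol_le
  by_cases hm : (i + 1, jsq lam (⇑T) x i) ∈ lam
  · right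
    rw [xsq_succ]
    exact T.col_strict (Nat.lt_succ_self i) hm
  · exact Or.inl hm

theorem jsq_anti {i i' : ℕ} (h : i ≤ i') (h2 : i' ≤ kst lam (⇑T) x) :
    jsq lam (⇑T) x i' ≤ jsq lam (⇑T) x i := by
  obtain ⟨m, rfl⟩ : ∃ m, i' = i + m := ⟨i' - i, by omega⟩
  clear h
  induction m with
  | zero => exact le_rfl
  | succ m ih =>
    have h3 : i + m < kst lam (⇑T) x := by omega
    calc jsq lam (⇑T) x (i + m + 1) ≤ jsq lam (⇑T) x (i + m) := jsq_succ_le lam T x h3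
      _ ≤ jsq lam (⇑T) x i := ih (by omega)

theorem xsq_lt_succ {i : ℕ} (h : i < kst lam (⇑T) x) :
    xsq lam (⇑T) x i < xsq lam (⇑T) x (i + 1) := by
  rw [xsq_succ]
  exact bcol_spec lam (⇑T) (jsq_mem lam (⇑T) x h)

theorem xsq_mono {i i' : ℕ} (h : i ≤ i') (h2 : i' ≤ kst lam (⇑T) x) :
    xsq lam (⇑T) x i ≤ xsq lam (⇑T) x i' := by
  obtain ⟨m, rfl⟩ : ∃ m, i' = i + m := ⟨i' - i, by omega⟩
  clear h
  induction m with
  | zero => exact le_rfl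
  | succ m ih =>
    have h3 : i + m < kst lam (⇑T) x := by omega
    calc xsq lam (⇑T) x i ≤ xsq lam (⇑T) x (i + m) := ih (by omega)
      _ ≤ xsq lam (⇑T) x (i + m + 1) := le_of_lt (xsq_lt_succ lam T x h3)

theorem newCell_addable : IsAddable lam (kst lam (⇑T) x, jsq lam (⇑T) x (kst lam (⇑T) x)) := by
  refine ⟨kst_spec lam (⇑T) x, ?_, ?_⟩
  · rcases Nat.eq_zero_or_pos (kst lam (⇑T) x) with h0 | hpos
    · exact Or.inl h0
    · right
      show (kst lam (⇑T) x - 1, jsq lam (⇑T) x (kst lam (⇑T) x)) ∈ lam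
      exact lam.up_left_mem le_rfl (jsq_anti lam T x (by omega) le_rfl)
        (jsq_mem lam (⇑T) x (by omega))
  · rcases Nat.eq_zero_or_pos (jsq lam (⇑T) x (kst lam (⇑T) x)) with h0 | hpos
    · exact Or.inl h0
    · right
      show (kst lam (⇑T) x, jsq lam (⇑T) x (kst lam (⇑T) x) - 1) ∈ lam
      exact (jsq_min lam (⇑T) x (by omega :
        jsq lam (⇑T) x (kst lam (⇑T) x) - 1 < jsq lam (⇑T) x (kst lam (⇑T) x))).1

theorem mem_muIns (a b : ℕ) :
    (a, b) ∈ addBox lam (kst lam (⇑T) x, jsq lam (⇑T) x (kst lam (⇑T) x)) ↔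
      (a, b) ∈ lam ∨ (a = kst lam (⇑T) x ∧ b = jsq lam (⇑T) x (kst lam (⇑T) x)) := by
  rw [mem_addBox (newCell_addable lam T x)]
  rw [Prod.mk.injEq]
  tauto

theorem path_mem {a : ℕ} (h : a ≤ kst lam (⇑T) x) :
    (a, jsq lam (⇑T) x a) ∈ addBox lam (kst lam (⇑T) x, jsq lam (⇑T) x (kst lam (⇑T) x)) := by
  rw [mem_muIns]
  rcases Nat.lt_or_ge a (kst lam (⇑T) x) with hlt | hge
  · exact Or.inl (jsq_mem lam (⇑T) x hlt)
  · have : a = kst lam (⇑T) x := by omega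
    subst this
    exact Or.inr ⟨rfl, rfl⟩

theorem newE_zero {a b : ℕ}
    (h : (a, b) ∉ addBox lam (kst lam (⇑T) x, jsq lam (⇑T) x (kst lam (⇑T) x))) :
    newE lam (⇑T) x a b = 0 := by
  rw [newE_neg]
  · apply T.zeros
    intro hmem
    exact h ((mem_muIns lam T x a b).2 (Or.inl hmem))
  · rintro ⟨h1, rfl⟩
    exact h (path_mem lam T x h1)

theorem newE_row {a b : ℕ}
    (h : (a, b + 1) ∈ addBox lam (kst lam (⇑T) x, jsq lam (⇑T) x (kst lam (⇑T) x))) :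
    newE lam (⇑T) x a b ≤ newE lam (⇑T) x a (b + 1) := by
  by_cases hc1 : a ≤ kst lam (⇑T) x ∧ b = jsq lam (⇑T) x a
  · obtain ⟨ha, rfl⟩ := hc1
    rw [newE_pos lam (⇑T) x ha rfl,
      newE_neg lam (⇑T) x (by omega : ¬(a ≤ kst lam (⇑T) x ∧
        jsq lam (⇑T) x a + 1 = jsq lam (⇑T) x a))]
    rcases (mem_muIns lam T x _ _).1 h with hmem | ⟨h1, h2⟩
    · have hmem2 : (a, jsq lam (⇑T) x a) ∈ lam := lam.up_left_mem le_rfl (by omega) hmem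
      calc xsq lam (⇑T) x a ≤ T a (jsq lam (⇑T) x a) := le_of_lt (jsq_spec lam (⇑T) x hmem2)
        _ ≤ T a (jsq lam (⇑T) x a + 1) := T.row_weak (by omega) hmem
    · subst h1
      omega
  · by_cases hc2 : a ≤ kst lam (⇑T) x ∧ b + 1 = jsq lam (⇑T) x a
    · obtain ⟨ha, hb⟩ := hc2
      rw [newE_neg lam (⇑T) x (by omega : ¬(a ≤ kst lam (⇑T) x ∧ b = jsq lam (⇑T) x a)),
        newE_pos lam (⇑T) x ha hb]
      exact (jsq_min lam (⇑T) x (by omega : b < jsq lam (⇑T) x a)).2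
    · rw [newE_neg lam (⇑T) x hc1, newE_neg lam (⇑T) x hc2]
      rcases (mem_muIns lam T x _ _).1 h with hmem | ⟨h1, h2⟩
      · exact T.row_weak (by omega) hmem
      · subst h1
        exact absurd ⟨le_rfl, h2⟩ hc2

theorem newE_col {a b : ℕ}
    (h : (a + 1, b) ∈ addBox lam (kst lam (⇑T) x, jsq lam (⇑T) x (kst lam (⇑T) x))) :
    newE lam (⇑T) x a b < newE lam (⇑T) x (a + 1) b := by
  by_cases hc1 : a + 1 ≤ kst lam (⇑T) x ∧ b = jsq lam (⇑T) x (a + 1)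
  · obtain ⟨ha, rfl⟩ := hc1
    have halt : a < kst lam (⇑T) x := by omega
    have hle : jsq lam (⇑T) x (a + 1) ≤ jsq lam (⇑T) x a := jsq_succ_le lam T x halt
    rw [newE_pos lam (⇑T) x ha rfl]
    by_cases hb : jsq lam (⇑T) x (a + 1) = jsq lam (⇑T) x a
    · rw [newE_pos lam (⇑T) x (le_of_lt halt) hb]
      exact xsq_lt_succ lam T x halt
    · rw [newE_neg lam (⇑T) x (by tauto : ¬(a ≤ kst lam (⇑T) x ∧
        jsq lam (⇑T) x (a + 1) = jsq lam (⇑T) x a))]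
      have hblt : jsq lam (⇑T) x (a + 1) < jsq lam (⇑T) x a := by omega
      calc T a (jsq lam (⇑T) x (a + 1)) ≤ xsq lam (⇑T) x a := (jsq_min lam (⇑T) x hblt).2
        _ < xsq lam (⇑T) x (a + 1) := xsq_lt_succ lam T x halt
  · have hmem : (a + 1, b) ∈ lam := by
      rcases (mem_muIns lam T x _ _).1 h with hmem | ⟨h1, h2⟩
      · exact hmem
      · rw [h1] at hc1
        exact absurd ⟨le_rfl, h2⟩ hc1
    rw [newE_neg lam (⇑T) x hc1]
    by_cases hc3 : a ≤ kst lam (⇑T) x ∧ b = jsq lam (⇑T) x a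
    · obtain ⟨ha, rfl⟩ := hc3
      have haK : a < kst lam (⇑T) x := by
        rcases Nat.lt_or_ge a (kst lam (⇑T) x) with h5 | h5
        · exact h5
        · exfalso
          have h6 : a = kst lam (⇑T) x := by omega
          have h7 : (a, jsq lam (⇑T) x a) ∈ lam :=
            lam.up_left_mem (Nat.le_succ a) le_rfl hmem
          rw [h6] at h7
          exact kst_spec lam (⇑T) x h7
      rw [newE_pos lam (⇑T) x ha rfl]
      have hmem2 : (a, jsq lam (⇑T) x a) ∈ lam := jsq_mem lam (⇑T) x haK
      calc xsq lam (⇑T) x a < T a (jsq lam (⇑T) x a) := jsq_spec lam (⇑T) x hmem2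
        _ < T (a + 1) (jsq lam (⇑T) x a) := T.col_strict (Nat.lt_succ_self a) hmem
    · rw [newE_neg lam (⇑T) x hc3]
      exact T.col_strict (Nat.lt_succ_self a) hmem

/-- The tableau obtained by row-inserting `x` into `T`. -/
noncomputable def fwdSSYT :
    SemistandardYoungTableau (addBox lam (kst lam (⇑T) x, jsq lam (⇑T) x (kst lam (⇑T) x))) :=
  mkSSYT _ (newE lam (⇑T) x) (fun _ _ h => newE_row lam T x h)
    (fun _ _ h => newE_col lam T x h) (fun _ _ h => newE_zero lam T x h)

theorem xsq_bd {d : ℕ} (hT : ∀ i j : ℕ, (i, j) ∈ lam → T i j < d) (hx : x < d) {a : ℕ}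
    (h : a ≤ kst lam (⇑T) x) : xsq lam (⇑T) x a < d := by
  induction a with
  | zero => exact hx
  | succ a ih =>
    rw [xsq_succ]
    exact hT _ _ (jsq_mem lam (⇑T) x (by omega))

theorem newE_bd {d : ℕ} (hT : ∀ i j : ℕ, (i, j) ∈ lam → T i j < d) (hx : x < d) {a b : ℕ}
    (h : (a, b) ∈ addBox lam (kst lam (⇑T) x, jsq lam (⇑T) x (kst lam (⇑T) x))) :
    newE lam (⇑T) x a b < d := by
  by_cases hcond : a ≤ kst lam (⇑T) x ∧ b = jsq lam (⇑T) x a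
  · rw [newE_pos lam (⇑T) x hcond.1 hcond.2]
    exact xsq_bd lam T x hT hx hcond.1
  · rw [newE_neg lam (⇑T) x hcond]
    rcases (mem_muIns lam T x _ _).1 h with hmem | ⟨h1, h2⟩
    · exact hT _ _ hmem
    · rw [h1] at hcond
      exact absurd ⟨le_rfl, h2⟩ hcond

end InsertionSSYT


/-! ### Reverse row insertion -/

section Reverse

variable (lam : YoungDiagram) (g : ℕ → ℕ → ℕ) (c : ℕ × ℕ)

/-- The rightmost column of row `r` whose entry is `< y`. -/
def gcl (r y : ℕ) : ℕ :=
  Nat.findGreatest (fun j => (r, j) ∈ lam ∧ g r j < y) (lam.rowLen r)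

/-- The values along the reverse bumping path starting from the corner `c`. -/
def vsq : ℕ → ℕ
  | 0 => g c.1 c.2
  | m + 1 => g (c.1 - 1 - m) (gcl lam g (c.1 - 1 - m) (vsq m))

/-- The columns of the reverse bumping path. -/
def gsq (r : ℕ) : ℕ := gcl lam g r (vsq lam g c (c.1 - 1 - r))

theorem gsq_eq_gcl {m : ℕ} (hm : m < c.1) :
    gsq lam g c (c.1 - 1 - m) = gcl lam g (c.1 - 1 - m) (vsq lam g c m) := by
  rw [gsq, show c.1 - 1 - (c.1 - 1 - m) = m from by omega]

theorem vsq_at {r : ℕ} (h : r < c.1) :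
    vsq lam g c (c.1 - r) = g r (gsq lam g c r) := by
  have h1 : c.1 - r = (c.1 - 1 - r) + 1 := by omega
  rw [h1]
  show g (c.1 - 1 - (c.1 - 1 - r)) (gcl lam g (c.1 - 1 - (c.1 - 1 - r))
    (vsq lam g c (c.1 - 1 - r))) = g r (gsq lam g c r)
  rw [show c.1 - 1 - (c.1 - 1 - r) = r from by omega]
  rfl

theorem gcl_max {r y j : ℕ} (h1 : gcl lam g r y < j) (h2 : (r, j) ∈ lam) : y ≤ g r j := by
  have hb : j ≤ lam.rowLen r := le_of_lt (YoungDiagram.mem_iff_lt_rowLen.1 h2)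
  have h3 := (Nat.findGreatest_eq_iff.1
    (rfl : gcl lam g r y = Nat.findGreatest (fun j => (r, j) ∈ lam ∧ g r j < y)
      (lam.rowLen r))).2.2 h1 hb
  push_neg at h3
  exact h3 h2

theorem gcl_spec {r y j0 : ℕ} (h0 : (r, j0) ∈ lam ∧ g r j0 < y) :
    (r, gcl lam g r y) ∈ lam ∧ g r (gcl lam g r y) < y :=
  Nat.findGreatest_spec (P := fun j => (r, j) ∈ lam ∧ g r j < y)
    (le_of_lt (YoungDiagram.mem_iff_lt_rowLen.1 h0.1)) h0

theorem le_gcl {r y j0 : ℕ} (h0 : (r, j0) ∈ lam ∧ g r j0 < y) : j0 ≤ gcl lam g r y :=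
  Nat.le_findGreatest (P := fun j => (r, j) ∈ lam ∧ g r j < y)
    (le_of_lt (YoungDiagram.mem_iff_lt_rowLen.1 h0.1)) h0

end Reverse

section ReverseSSYT

variable (lam : YoungDiagram) (c : ℕ × ℕ) (hc : IsAddable lam c)
  (U : SemistandardYoungTableau (addBox lam c))

include hc

theorem rev_facts (m : ℕ) (hm : m < c.1) :
    (c.1 - 1 - m, gsq lam (⇑U) c (c.1 - 1 - m)) ∈ lam ∧
      U (c.1 - 1 - m) (gsq lam (⇑U) c (c.1 - 1 - m)) < vsq lam (⇑U) c m ∧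
      c.2 ≤ gsq lam (⇑U) c (c.1 - 1 - m) := by
  induction m with
  | zero =>
    have hcm : (c.1, c.2) ∈ addBox lam c := by
      rw [mem_addBox hc]
      exact Or.inl rfl
    have hmem : (c.1 - 1, c.2) ∈ lam := by
      have h1 : (c.1 - 1, c.2) ∈ addBox lam c :=
        (addBox lam c).up_left_mem (by omega) le_rfl hcm
      rcases (mem_addBox hc _).1 h1 with heq | h2
      · exfalso
        have := congrArg Prod.fst heq
        simp only at this
        omega
      · exact h2
    have hval : U (c.1 - 1) c.2 < vsq lam (⇑U) c 0 :=
      U.col_strict (by omega) hcm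
    have h0 : (c.1 - 1, c.2) ∈ lam ∧ U (c.1 - 1) c.2 < vsq lam (⇑U) c 0 := ⟨hmem, hval⟩
    have hg : gsq lam (⇑U) c (c.1 - 1) = gcl lam (⇑U) (c.1 - 1) (vsq lam (⇑U) c 0) := by
      have h1 := gsq_eq_gcl lam (⇑U) c hm
      simpa using h1
    simp only [Nat.sub_zero]
    rw [hg]
    exact ⟨(gcl_spec lam (⇑U) h0).1, (gcl_spec lam (⇑U) h0).2, le_gcl lam (⇑U) h0⟩
  | succ m ih =>
    have ihm := ih (by omega)
    set r' := c.1 - 1 - m with hr'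
    have hr'pos : 1 ≤ r' := by omega
    have hv : vsq lam (⇑U) c (m + 1) = U r' (gsq lam (⇑U) c r') := by
      have h1 := vsq_at lam (⇑U) c (show r' < c.1 from by omega)
      rwa [show c.1 - r' = m + 1 from by omega] at h1
    have hmem : (r' - 1, gsq lam (⇑U) c r') ∈ lam :=
      lam.up_left_mem (by omega) le_rfl ihm.1
    have hval : U (r' - 1) (gsq lam (⇑U) c r') < vsq lam (⇑U) c (m + 1) := by
      rw [hv]
      exact U.col_strict (by omega) ((mem_addBox hc _).2 (Or.inr ihm.1))
    have h0 : (r' - 1, gsq lam (⇑U) c r') ∈ lam ∧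
        U (r' - 1) (gsq lam (⇑U) c r') < vsq lam (⇑U) c (m + 1) := ⟨hmem, hval⟩
    have hidx : c.1 - 1 - (m + 1) = r' - 1 := by omega
    have hg : gsq lam (⇑U) c (r' - 1) = gcl lam (⇑U) (r' - 1) (vsq lam (⇑U) c (m + 1)) := by
      have h1 := gsq_eq_gcl lam (⇑U) c hm
      rwa [hidx] at h1
    rw [hidx, hg]
    refine ⟨(gcl_spec lam (⇑U) h0).1, (gcl_spec lam (⇑U) h0).2, ?_⟩
    exact le_trans ihm.2.2 (le_gcl lam (⇑U) h0)

theorem gsq_mem {r : ℕ} (h : r < c.1) : (r, gsq lam (⇑U) c r) ∈ lam := by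
  have h1 := (rev_facts lam c hc U (c.1 - 1 - r) (by omega)).1
  rwa [show c.1 - 1 - (c.1 - 1 - r) = r from by omega] at h1

theorem gsq_val {r : ℕ} (h : r < c.1) :
    U r (gsq lam (⇑U) c r) < vsq lam (⇑U) c (c.1 - 1 - r) := by
  have h1 := (rev_facts lam c hc U (c.1 - 1 - r) (by omega)).2.1
  rwa [show c.1 - 1 - (c.1 - 1 - r) = r from by omega] at h1

theorem le_gsq {r : ℕ} (h : r < c.1) : c.2 ≤ gsq lam (⇑U) c r := by
  have h1 := (rev_facts lam c hc U (c.1 - 1 - r) (by omega)).2.2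
  rwa [show c.1 - 1 - (c.1 - 1 - r) = r from by omega] at h1

theorem vsq_dec {m : ℕ} (h : m + 1 ≤ c.1) :
    vsq lam (⇑U) c (m + 1) < vsq lam (⇑U) c m := by
  have hr : c.1 - 1 - m < c.1 := by omega
  have hv : vsq lam (⇑U) c (m + 1) = U (c.1 - 1 - m) (gsq lam (⇑U) c (c.1 - 1 - m)) := by
    have h1 := vsq_at lam (⇑U) c hr
    rwa [show c.1 - (c.1 - 1 - m) = m + 1 from by omega] at h1
  rw [hv]
  have h2 := gsq_val lam c hc U hr
  rwa [show c.1 - 1 - (c.1 - 1 - m) = m from by omega] at h2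

theorem vsq_bd {d : ℕ} (hU : ∀ i j : ℕ, (i, j) ∈ addBox lam c → U i j < d) {m : ℕ}
    (h : m ≤ c.1) : vsq lam (⇑U) c m < d := by
  cases m with
  | zero => exact hU c.1 c.2 ((mem_addBox hc _).2 (Or.inl rfl))
  | succ m =>
    have hr : c.1 - 1 - m < c.1 := by omega
    have hv : vsq lam (⇑U) c (m + 1) = U (c.1 - 1 - m) (gsq lam (⇑U) c (c.1 - 1 - m)) := by
      have h1 := vsq_at lam (⇑U) c hr
      rwa [show c.1 - (c.1 - 1 - m) = m + 1 from by omega] at h1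
    rw [hv]
    exact hU _ _ ((mem_addBox hc _).2 (Or.inr (gsq_mem lam c hc U hr)))

end ReverseSSYT


/-! ### The tableau extracted by reverse insertion -/

section TentDef

variable (lam : YoungDiagram) (g : ℕ → ℕ → ℕ) (c : ℕ × ℕ)

/-- The tableau left after reverse bumping from the corner `c`. -/
def tentE : ℕ → ℕ → ℕ := fun a b =>
  if a < c.1 ∧ b = gsq lam g c a then vsq lam g c (c.1 - 1 - a)
  else if a = c.1 ∧ b = c.2 then 0 else g a b

theorem tentE_pos1 {a b : ℕ} (h1 : a < c.1) (h2 : b = gsq lam g c a) :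
    tentE lam g c a b = vsq lam g c (c.1 - 1 - a) := by
  simp only [tentE]
  rw [if_pos ⟨h1, h2⟩]

theorem tentE_pos2 {a b : ℕ} (h1 : a = c.1) (h2 : b = c.2) : tentE lam g c a b = 0 := by
  simp only [tentE]
  rw [if_neg (by omega : ¬(a < c.1 ∧ b = gsq lam g c a)), if_pos ⟨h1, h2⟩]

theorem tentE_neg {a b : ℕ} (h1 : ¬(a < c.1 ∧ b = gsq lam g c a))
    (h2 : ¬(a = c.1 ∧ b = c.2)) : tentE lam g c a b = g a b := by
  simp only [tentE]
  rw [if_neg h1, if_neg h2]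

end TentDef

section TentSSYT

variable (lam : YoungDiagram) (c : ℕ × ℕ) (hc : IsAddable lam c)
  (U : SemistandardYoungTableau (addBox lam c))

include hc

theorem gsq_succ_le {r : ℕ} (h : r + 1 < c.1) :
    gsq lam (⇑U) c (r + 1) ≤ gsq lam (⇑U) c r := by
  have hmem : (r, gsq lam (⇑U) c (r + 1)) ∈ lam :=
    lam.up_left_mem (Nat.le_succ r) le_rfl (gsq_mem lam c hc U h)
  have hval : U r (gsq lam (⇑U) c (r + 1)) < vsq lam (⇑U) c (c.1 - 1 - r) := by
    have h1 : U r (gsq lam (⇑U) c (r + 1)) < U (r + 1) (gsq lam (⇑U) c (r + 1)) :=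
      U.col_strict (Nat.lt_succ_self r)
        ((mem_addBox hc _).2 (Or.inr (gsq_mem lam c hc U h)))
    have h2 := vsq_at lam (⇑U) c h
    have h3 : c.1 - (r + 1) = c.1 - 1 - r := by omega
    rw [h3] at h2
    rw [← h2] at h1
    exact h1
  exact le_gcl lam (⇑U) ⟨hmem, hval⟩

theorem tentE_zero {a b : ℕ} (h : (a, b) ∉ lam) : tentE lam (⇑U) c a b = 0 := by
  by_cases hc1 : a < c.1 ∧ b = gsq lam (⇑U) c a
  · exact absurd (hc1.2 ▸ gsq_mem lam c hc U hc1.1) h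
  · by_cases hc2 : a = c.1 ∧ b = c.2
    · exact tentE_pos2 lam (⇑U) c hc2.1 hc2.2
    · rw [tentE_neg lam (⇑U) c hc1 hc2]
      apply U.zeros
      rw [mem_addBox hc]
      rintro (heq | hmem)
      · exact hc2 ⟨congrArg Prod.fst heq, congrArg Prod.snd heq⟩
      · exact h hmem

theorem tentE_row {a b : ℕ} (h : (a, b + 1) ∈ lam) :
    tentE lam (⇑U) c a b ≤ tentE lam (⇑U) c a (b + 1) := by
  have hmu : (a, b + 1) ∈ addBox lam c := (mem_addBox hc _).2 (Or.inr h)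
  by_cases hc1 : a < c.1 ∧ b = gsq lam (⇑U) c a
  · obtain ⟨ha, rfl⟩ := hc1
    rw [tentE_pos1 lam (⇑U) c ha rfl,
      tentE_neg lam (⇑U) c (by omega : ¬(a < c.1 ∧
        gsq lam (⇑U) c a + 1 = gsq lam (⇑U) c a)) (by
          rintro ⟨h1, h2⟩
          rw [h2, h1] at h
          exact hc.1 (by rwa [Prod.mk.eta] at h))]
    exact gcl_max lam (⇑U) (Nat.lt_succ_self _) h
  · by_cases hc2 : a < c.1 ∧ b + 1 = gsq lam (⇑U) c a
    · obtain ⟨ha, hb⟩ := hc2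
      rw [tentE_pos1 lam (⇑U) c ha hb,
        tentE_neg lam (⇑U) c (by omega : ¬(a < c.1 ∧ b = gsq lam (⇑U) c a))
          (by rintro ⟨h1, h2⟩; omega)]
      have hmem : (a, gsq lam (⇑U) c a) ∈ addBox lam c :=
        (mem_addBox hc _).2 (Or.inr (gsq_mem lam c hc U ha))
      exact le_of_lt (lt_of_le_of_lt (U.row_weak_of_le (by omega) hmem)
        (gsq_val lam c hc U ha))
    · have hcc2 : ¬(a = c.1 ∧ b + 1 = c.2) := by
        rintro ⟨h1, h2⟩
        rw [h1, h2] at h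
        exact hc.1 (by rwa [Prod.mk.eta] at h)
      have hcc1 : ¬(a = c.1 ∧ b = c.2) := by
        rintro ⟨h1, h2⟩
        have hmem : (a, b) ∈ lam := lam.up_left_mem le_rfl (Nat.le_succ b) h
        rw [h1, h2] at hmem
        exact hc.1 (by rwa [Prod.mk.eta] at hmem)
      rw [tentE_neg lam (⇑U) c hc1 hcc1, tentE_neg lam (⇑U) c hc2 hcc2]
      exact U.row_weak (Nat.lt_succ_self b) hmu

theorem tentE_col {a b : ℕ} (h : (a + 1, b) ∈ lam) :
    tentE lam (⇑U) c a b < tentE lam (⇑U) c (a + 1) b := by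
  have hmu : (a + 1, b) ∈ addBox lam c := (mem_addBox hc _).2 (Or.inr h)
  by_cases hA : a + 1 < c.1 ∧ b = gsq lam (⇑U) c (a + 1)
  · obtain ⟨ha1, rfl⟩ := hA
    rw [tentE_pos1 lam (⇑U) c ha1 rfl]
    by_cases hb : gsq lam (⇑U) c (a + 1) = gsq lam (⇑U) c a
    · rw [tentE_pos1 lam (⇑U) c (by omega) hb]
      have h4 : c.1 - 1 - a = (c.1 - 1 - (a + 1)) + 1 := by omega
      rw [h4]
      exact vsq_dec lam c hc U (by omega)
    · rw [tentE_neg lam (⇑U) c (by tauto) (by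
        rintro ⟨h1, h2⟩
        omega)]
      calc U a (gsq lam (⇑U) c (a + 1)) < U (a + 1) (gsq lam (⇑U) c (a + 1)) :=
          U.col_strict (Nat.lt_succ_self a) hmu
        _ < vsq lam (⇑U) c (c.1 - 1 - (a + 1)) := gsq_val lam c hc U ha1
  · have hB : ¬(a + 1 = c.1 ∧ b = c.2) := by
      rintro ⟨h1, h2⟩
      rw [h1, h2] at h
      exact hc.1 (by rwa [Prod.mk.eta] at h)
    rw [tentE_neg lam (⇑U) c hA hB]
    by_cases hc3 : a < c.1 ∧ b = gsq lam (⇑U) c a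
    · obtain ⟨ha, rfl⟩ := hc3
      rw [tentE_pos1 lam (⇑U) c ha rfl]
      rcases Nat.lt_or_ge (a + 1) c.1 with ha1 | ha1
      · have hlt : gsq lam (⇑U) c (a + 1) < gsq lam (⇑U) c a := by
          have hle := gsq_succ_le lam c hc U ha1
          have hne : ¬(gsq lam (⇑U) c a = gsq lam (⇑U) c (a + 1)) := fun heq => hA ⟨ha1, heq⟩
          omega
        have hmax : vsq lam (⇑U) c (c.1 - 1 - (a + 1)) ≤ U (a + 1) (gsq lam (⇑U) c a) := by
          apply gcl_max lam (⇑U) _ h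
          show gcl lam (⇑U) (a + 1) (vsq lam (⇑U) c (c.1 - 1 - (a + 1))) < gsq lam (⇑U) c a
          exact hlt
        have hdec : vsq lam (⇑U) c (c.1 - 1 - a) < vsq lam (⇑U) c (c.1 - 1 - (a + 1)) := by
          have h4 : c.1 - 1 - a = (c.1 - 1 - (a + 1)) + 1 := by omega
          rw [h4]
          exact vsq_dec lam c hc U (by omega)
        omega
      · exfalso
        have heq : a + 1 = c.1 := by omega
        have hrl : c.2 = lam.rowLen c.1 := (isAddable_eq_rowLen hc).1
        have hb2 : gsq lam (⇑U) c a < lam.rowLen (a + 1) := YoungDiagram.mem_iff_lt_rowLen.1 h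
        have hb3 : c.2 ≤ gsq lam (⇑U) c a := le_gsq lam c hc U ha
        rw [heq] at hb2
        omega
    · have hc4 : ¬(a = c.1 ∧ b = c.2) := by
        rintro ⟨h1, h2⟩
        have hmem : (a, b) ∈ lam := lam.up_left_mem (Nat.le_succ a) le_rfl h
        rw [h1, h2] at hmem
        exact hc.1 (by rwa [Prod.mk.eta] at hmem)
      rw [tentE_neg lam (⇑U) c hc3 hc4]
      exact U.col_strict (Nat.lt_succ_self a) hmu

theorem tentE_bd {d : ℕ} (hU : ∀ i j : ℕ, (i, j) ∈ addBox lam c → U i j < d) {a b : ℕ}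
    (h : (a, b) ∈ lam) : tentE lam (⇑U) c a b < d := by
  by_cases hc1 : a < c.1 ∧ b = gsq lam (⇑U) c a
  · rw [tentE_pos1 lam (⇑U) c hc1.1 hc1.2]
    exact vsq_bd lam c hc U hU (by omega)
  · by_cases hc2 : a = c.1 ∧ b = c.2
    · exfalso
      obtain ⟨h1, h2⟩ := hc2
      rw [h1, h2] at h
      exact hc.1 (by rwa [Prod.mk.eta] at h)
    · rw [tentE_neg lam (⇑U) c hc1 hc2]
      exact hU _ _ ((mem_addBox hc _).2 (Or.inr h))

/-- The tableau extracted by reverse insertion. -/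
def revSSYT : SemistandardYoungTableau lam :=
  mkSSYT lam (tentE lam (⇑U) c) (fun _ _ h => tentE_row lam c hc U h)
    (fun _ _ h => tentE_col lam c hc U h) (fun _ _ h => tentE_zero lam c hc U h)

end TentSSYT


/-! ### Reverse of forward -/

section CompA

variable (lam : YoungDiagram) (T : SemistandardYoungTableau lam) (x : ℕ)

theorem vsq_zero_eq (g : ℕ → ℕ → ℕ) (c : ℕ × ℕ) : vsq lam g c 0 = g c.1 c.2 := rfl

theorem vsq_succ_eq (g : ℕ → ℕ → ℕ) (c : ℕ × ℕ) (m : ℕ) :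
    vsq lam g c (m + 1) = g (c.1 - 1 - m) (gcl lam g (c.1 - 1 - m) (vsq lam g c m)) := rfl

theorem gcl_newE_eq {r : ℕ} (hr : r < kst lam (⇑T) x) :
    gcl lam (newE lam (⇑T) x) r (xsq lam (⇑T) x (r + 1)) = jsq lam (⇑T) x r := by
  rw [gcl]
  rw [Nat.findGreatest_eq_iff]
  have hmem : (r, jsq lam (⇑T) x r) ∈ lam := jsq_mem lam (⇑T) x hr
  refine ⟨le_of_lt (YoungDiagram.mem_iff_lt_rowLen.1 hmem), fun _ => ⟨hmem, ?_⟩, ?_⟩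
  · rw [newE_pos lam (⇑T) x (le_of_lt hr) rfl]
    exact xsq_lt_succ lam T x hr
  · intro n hn _
    rintro ⟨hnmem, hnlt⟩
    rw [newE_neg lam (⇑T) x (by omega : ¬(r ≤ kst lam (⇑T) x ∧ n = jsq lam (⇑T) x r))] at hnlt
    have hge : T r (jsq lam (⇑T) x r) ≤ T r n := T.row_weak_of_le (by omega) hnmem
    rw [show T r (jsq lam (⇑T) x r) = xsq lam (⇑T) x (r + 1) from (xsq_succ lam (⇑T) x r).symm]
      at hge
    omega

theorem compA_vs (m : ℕ) (hm : m ≤ kst lam (⇑T) x) :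
    vsq lam (newE lam (⇑T) x)
      (kst lam (⇑T) x, jsq lam (⇑T) x (kst lam (⇑T) x)) m =
    xsq lam (⇑T) x (kst lam (⇑T) x - m) := by
  induction m with
  | zero =>
    rw [vsq_zero_eq]
    rw [Nat.sub_zero]
    exact newE_pos lam (⇑T) x le_rfl rfl
  | succ m ih =>
    have ihm := ih (by omega)
    rw [vsq_succ_eq]
    have hfst : (kst lam (⇑T) x, jsq lam (⇑T) x (kst lam (⇑T) x)).1 = kst lam (⇑T) x := rfl
    rw [hfst, ihm]
    have h1 : kst lam (⇑T) x - m = (kst lam (⇑T) x - 1 - m) + 1 := by omega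
    rw [h1]
    rw [gcl_newE_eq lam T x (by omega)]
    rw [newE_pos lam (⇑T) x (by omega) rfl]
    congr 1
    omega

theorem compA_gs {r : ℕ} (hr : r < kst lam (⇑T) x) :
    gsq lam (newE lam (⇑T) x) (kst lam (⇑T) x, jsq lam (⇑T) x (kst lam (⇑T) x)) r =
    jsq lam (⇑T) x r := by
  rw [gsq]
  have hfst : (kst lam (⇑T) x, jsq lam (⇑T) x (kst lam (⇑T) x)).1 = kst lam (⇑T) x := rfl
  rw [hfst]
  rw [compA_vs lam T x (kst lam (⇑T) x - 1 - r) (by omega)]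
  rw [show kst lam (⇑T) x - (kst lam (⇑T) x - 1 - r) = r + 1 from by omega]
  exact gcl_newE_eq lam T x hr

theorem compA_x :
    vsq lam (newE lam (⇑T) x) (kst lam (⇑T) x, jsq lam (⇑T) x (kst lam (⇑T) x))
      (kst lam (⇑T) x) = x := by
  rw [compA_vs lam T x _ le_rfl, Nat.sub_self]
  rfl

theorem compA_tent (a b : ℕ) :
    tentE lam (newE lam (⇑T) x)
      (kst lam (⇑T) x, jsq lam (⇑T) x (kst lam (⇑T) x)) a b = T a b := by
  by_cases h1 : a < kst lam (⇑T) x ∧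
      b = gsq lam (newE lam (⇑T) x) (kst lam (⇑T) x, jsq lam (⇑T) x (kst lam (⇑T) x)) a
  · obtain ⟨ha, rfl⟩ := h1
    rw [tentE_pos1 lam (newE lam (⇑T) x) _ ha rfl]
    have hfst : (kst lam (⇑T) x, jsq lam (⇑T) x (kst lam (⇑T) x)).1 = kst lam (⇑T) x := rfl
    rw [hfst]
    rw [compA_vs lam T x (kst lam (⇑T) x - 1 - a) (by omega)]
    rw [show kst lam (⇑T) x - (kst lam (⇑T) x - 1 - a) = a + 1 from by omega]
    rw [xsq_succ, compA_gs lam T x ha]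
  · by_cases h2 : a = kst lam (⇑T) x ∧ b = jsq lam (⇑T) x (kst lam (⇑T) x)
    · obtain ⟨rfl, rfl⟩ := h2
      rw [tentE_pos2 lam (newE lam (⇑T) x) _ rfl rfl]
      exact (T.zeros (kst_spec lam (⇑T) x)).symm
    · rw [tentE_neg lam (newE lam (⇑T) x) _ h1 h2]
      apply newE_neg
      rintro ⟨hle, rfl⟩
      rcases Nat.lt_or_ge a (kst lam (⇑T) x) with hlt | hge
      · exact h1 ⟨hlt, (compA_gs lam T x hlt).symm⟩
      · have heq : a = kst lam (⇑T) x := by omega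
        exact h2 ⟨heq, by rw [heq]⟩

end CompA

/-! ### Forward of reverse -/

section CompB

variable (lam : YoungDiagram) (c : ℕ × ℕ) (hc : IsAddable lam c)
  (U : SemistandardYoungTableau (addBox lam c))

include hc

theorem compB_js {r : ℕ} (hr : r < c.1)
    (hxs : xsq lam (tentE lam (⇑U) c) (vsq lam (⇑U) c c.1) r = vsq lam (⇑U) c (c.1 - r)) :
    jsq lam (tentE lam (⇑U) c) (vsq lam (⇑U) c c.1) r = gsq lam (⇑U) c r := by
  apply le_antisymm
  · apply jsq_le
    right
    rw [tentE_pos1 lam (⇑U) c hr rfl, hxs]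
    rw [show c.1 - r = (c.1 - 1 - r) + 1 from by omega]
    exact vsq_dec lam c hc U (by omega)
  · by_contra hcon
    push_neg at hcon
    have hspec : (r, jsq lam (tentE lam (⇑U) c) (vsq lam (⇑U) c c.1) r) ∉ lam ∨
        xsq lam (tentE lam (⇑U) c) (vsq lam (⇑U) c c.1) r <
          tentE lam (⇑U) c r (jsq lam (tentE lam (⇑U) c) (vsq lam (⇑U) c c.1) r) :=
      Nat.find_spec (bump_ex lam (tentE lam (⇑U) c) r
        (xsq lam (tentE lam (⇑U) c) (vsq lam (⇑U) c c.1) r))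
    rcases hspec with hout | hlt
    · exact hout (lam.up_left_mem le_rfl (le_of_lt hcon) (gsq_mem lam c hc U hr))
    · rw [tentE_neg lam (⇑U) c
        (fun hand => absurd hand.2 (Nat.ne_of_lt hcon))
        (fun hand => absurd hand.1 (Nat.ne_of_lt hr))] at hlt
      have hle : U r (jsq lam (tentE lam (⇑U) c) (vsq lam (⇑U) c c.1) r) ≤
          U r (gsq lam (⇑U) c r) :=
        U.row_weak_of_le (le_of_lt hcon)
          ((mem_addBox hc _).2 (Or.inr (gsq_mem lam c hc U hr)))
      have hvs : U r (gsq lam (⇑U) c r) = vsq lam (⇑U) c (c.1 - r) :=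
        (vsq_at lam (⇑U) c hr).symm
      rw [hxs] at hlt
      omega

theorem compB_xs (r : ℕ) (hr : r ≤ c.1) :
    xsq lam (tentE lam (⇑U) c) (vsq lam (⇑U) c c.1) r = vsq lam (⇑U) c (c.1 - r) := by
  induction r with
  | zero =>
    rw [Nat.sub_zero]
    rfl
  | succ r ih =>
    have ihr := ih (by omega)
    rw [xsq_succ, compB_js lam c hc U (by omega) ihr]
    rw [tentE_pos1 lam (⇑U) c (by omega) rfl]
    congr 1
    omega

theorem compB_jsK :
    jsq lam (tentE lam (⇑U) c) (vsq lam (⇑U) c c.1) c.1 = c.2 := by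
  have hrl : c.2 = lam.rowLen c.1 := (isAddable_eq_rowLen hc).1
  apply le_antisymm
  · apply jsq_le
    left
    rw [YoungDiagram.mem_iff_lt_rowLen]
    omega
  · by_contra hcon
    push_neg at hcon
    have hspec : (c.1, jsq lam (tentE lam (⇑U) c) (vsq lam (⇑U) c c.1) c.1) ∉ lam ∨
        xsq lam (tentE lam (⇑U) c) (vsq lam (⇑U) c c.1) c.1 <
          tentE lam (⇑U) c c.1 (jsq lam (tentE lam (⇑U) c) (vsq lam (⇑U) c c.1) c.1) :=
      Nat.find_spec (bump_ex lam (tentE lam (⇑U) c) c.1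
        (xsq lam (tentE lam (⇑U) c) (vsq lam (⇑U) c c.1) c.1))
    rcases hspec with hout | hlt
    · rw [YoungDiagram.mem_iff_lt_rowLen] at hout
      omega
    · rw [tentE_neg lam (⇑U) c
        (fun hand => absurd hand.1 (lt_irrefl c.1))
        (fun hand => absurd hand.2 (Nat.ne_of_lt hcon))] at hlt
      have hle : U c.1 (jsq lam (tentE lam (⇑U) c) (vsq lam (⇑U) c c.1) c.1) ≤ U c.1 c.2 :=
        U.row_weak_of_le (le_of_lt hcon) ((mem_addBox hc _).2 (Or.inl rfl))
      have hxsc : xsq lam (tentE lam (⇑U) c) (vsq lam (⇑U) c c.1) c.1 =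
          vsq lam (⇑U) c 0 := by
        have h2 := compB_xs lam c hc U c.1 le_rfl
        rwa [Nat.sub_self] at h2
      rw [hxsc, vsq_zero_eq] at hlt
      omega

theorem compB_kst :
    kst lam (tentE lam (⇑U) c) (vsq lam (⇑U) c c.1) = c.1 := by
  apply le_antisymm
  · apply kst_le
    rw [compB_jsK lam c hc U]
    intro hmem
    exact hc.1 (by rwa [Prod.mk.eta] at hmem)
  · by_contra hcon
    push_neg at hcon
    have hspec := kst_spec lam (tentE lam (⇑U) c) (vsq lam (⇑U) c c.1)
    have hmem : (kst lam (tentE lam (⇑U) c) (vsq lam (⇑U) c c.1),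
        jsq lam (tentE lam (⇑U) c) (vsq lam (⇑U) c c.1)
          (kst lam (tentE lam (⇑U) c) (vsq lam (⇑U) c c.1))) ∈ lam := by
      rw [compB_js lam c hc U hcon (compB_xs lam c hc U _ (le_of_lt hcon))]
      exact gsq_mem lam c hc U hcon
    exact hspec hmem

theorem compB_newE (a b : ℕ) :
    newE lam (tentE lam (⇑U) c) (vsq lam (⇑U) c c.1) a b = U a b := by
  have hK := compB_kst lam c hc U
  by_cases h1 : a ≤ c.1 ∧ b = jsq lam (tentE lam (⇑U) c) (vsq lam (⇑U) c c.1) a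
  · obtain ⟨ha, rfl⟩ := h1
    rw [newE_pos lam (tentE lam (⇑U) c) (vsq lam (⇑U) c c.1) (by rw [hK]; exact ha) rfl]
    rcases Nat.lt_or_ge a c.1 with hlt | hge
    · rw [compB_js lam c hc U hlt (compB_xs lam c hc U _ (le_of_lt hlt))]
      rw [compB_xs lam c hc U a (le_of_lt hlt)]
      exact vsq_at lam (⇑U) c hlt
    · have heq : a = c.1 := by omega
      rw [heq]
      rw [compB_jsK lam c hc U]
      rw [compB_xs lam c hc U c.1 le_rfl, Nat.sub_self, vsq_zero_eq]
  · rw [newE_neg lam (tentE lam (⇑U) c) (vsq lam (⇑U) c c.1) (by rw [hK]; exact h1)]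
    apply tentE_neg
    · rintro ⟨hlt, rfl⟩
      exact h1 ⟨le_of_lt hlt,
        (compB_js lam c hc U hlt (compB_xs lam c hc U _ (le_of_lt hlt))).symm⟩
    · rintro ⟨heq, rfl⟩
      refine h1 ⟨le_of_eq heq, ?_⟩
      rw [heq]
      exact (compB_jsK lam c hc U).symm

theorem compB_corner :
    (kst lam (tentE lam (⇑U) c) (vsq lam (⇑U) c c.1),
      jsq lam (tentE lam (⇑U) c) (vsq lam (⇑U) c c.1)
        (kst lam (tentE lam (⇑U) c) (vsq lam (⇑U) c c.1))) = c := by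
  have h1 := compB_kst lam c hc U
  rw [h1]
  rw [compB_jsK lam c hc U]

end CompB


/-! ### The Pieri counting lemma -/

theorem nat_card_sigma {α : Type*} {s : Finset α} (F : α → Type*) [∀ a, Finite (F a)] :
    Nat.card (Σ cc : {a // a ∈ s}, F cc.1) = ∑ a ∈ s, Nat.card (F a) := by
  letI : ∀ cc : {a // a ∈ s}, Fintype (F cc.1) := fun cc => Fintype.ofFinite _
  rw [Nat.card_eq_fintype_card, Fintype.card_sigma]
  rw [show (∑ a ∈ s, Nat.card (F a)) = ∑ cc ∈ s.attach, Nat.card (F cc.1) from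
    (Finset.sum_attach s fun a => Nat.card (F a)).symm]
  rw [← Finset.univ_eq_attach]
  apply Finset.sum_congr rfl
  intro cc _
  rw [Nat.card_eq_fintype_card]

section PieriMaps

variable (d : ℕ) (lam : YoungDiagram)

/-- The forward map of the Pieri bijection: row insertion. -/
noncomputable def FwdMap (p : Fin d × BddSSYT d lam) :
    Σ cc : {cc : ℕ × ℕ // cc ∈ addables lam}, BddSSYT d (addBox lam cc.1) :=
  ⟨⟨(kst lam (⇑p.2.1) (p.1 : ℕ), jsq lam (⇑p.2.1) (p.1 : ℕ) (kst lam (⇑p.2.1) (p.1 : ℕ))),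
    mem_addables.2 (newCell_addable lam p.2.1 (p.1 : ℕ))⟩,
   ⟨fwdSSYT lam p.2.1 (p.1 : ℕ),
    fun i j h => newE_bd lam p.2.1 (p.1 : ℕ) p.2.2 p.1.isLt h⟩⟩

/-- The reverse map of the Pieri bijection: reverse row insertion. -/
def RevMap (q : Σ cc : {cc : ℕ × ℕ // cc ∈ addables lam}, BddSSYT d (addBox lam cc.1)) :
    Fin d × BddSSYT d lam :=
  (⟨vsq lam (⇑q.2.1) q.1.1 q.1.1.1,
      vsq_bd lam q.1.1 (mem_addables.1 q.1.2) q.2.1 q.2.2 le_rfl⟩,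
   ⟨revSSYT lam q.1.1 (mem_addables.1 q.1.2) q.2.1,
    fun i j h => tentE_bd lam q.1.1 (mem_addables.1 q.1.2) q.2.1 q.2.2 h⟩)

theorem RevMap_FwdMap (p : Fin d × BddSSYT d lam) : RevMap d lam (FwdMap d lam p) = p := by
  obtain ⟨x, T, hT⟩ := p
  refine Prod.ext ?_ ?_
  · apply Fin.ext
    exact compA_x lam T (x : ℕ)
  · apply Subtype.ext
    apply SemistandardYoungTableau.ext
    intro a b
    exact compA_tent lam T (x : ℕ) a b

theorem FwdMap_injective : Function.Injective (FwdMap d lam) :=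
  Function.LeftInverse.injective (RevMap_FwdMap d lam)

/-- Recovering the corner from the reverse data. -/
noncomputable def recoverC (p : Fin d × BddSSYT d lam) : ℕ × ℕ :=
  (kst lam (⇑p.2.1) (p.1 : ℕ), jsq lam (⇑p.2.1) (p.1 : ℕ) (kst lam (⇑p.2.1) (p.1 : ℕ)))

theorem recoverC_rev (q : Σ cc : {cc : ℕ × ℕ // cc ∈ addables lam},
    BddSSYT d (addBox lam cc.1)) : recoverC d lam (RevMap d lam q) = q.1.1 :=
  compB_corner lam q.1.1 (mem_addables.1 q.1.2) q.2.1

theorem recoverE_rev (q : Σ cc : {cc : ℕ × ℕ // cc ∈ addables lam},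
    BddSSYT d (addBox lam cc.1)) (a b : ℕ) :
    newE lam (⇑((RevMap d lam q).2.1)) (((RevMap d lam q).1 : Fin d) : ℕ) a b = q.2.1 a b :=
  compB_newE lam q.1.1 (mem_addables.1 q.1.2) q.2.1 a b

theorem RevMap_injective : Function.Injective (RevMap d lam) := by
  intro q q' h
  have hcc : q.1.1 = q'.1.1 := by
    rw [← recoverC_rev d lam q, ← recoverC_rev d lam q', h]
  obtain ⟨⟨c, hcm⟩, U, hU⟩ := q
  obtain ⟨⟨c', hcm'⟩, U', hU'⟩ := q'
  simp only at hcc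
  subst hcc
  have hpe : hcm = hcm' := rfl
  subst hpe
  have hUU : U = U' := by
    apply SemistandardYoungTableau.ext
    intro a b
    have h1 := recoverE_rev d lam ⟨⟨c, hcm⟩, U, hU⟩ a b
    have h2 := recoverE_rev d lam ⟨⟨c, hcm⟩, U', hU'⟩ a b
    rw [h] at h1
    exact h1.symm.trans h2
  subst hUU
  have hpe2 : hU = hU' := rfl
  subst hpe2
  rfl

theorem pieri_count : d * ssytCount d lam = ∑ cc ∈ addables lam, ssytCount d (addBox lam cc) := by
  have hle1 : Nat.card (Fin d × BddSSYT d lam) ≤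
      Nat.card (Σ cc : {cc : ℕ × ℕ // cc ∈ addables lam}, BddSSYT d (addBox lam cc.1)) :=
    Nat.card_le_card_of_injective _ (FwdMap_injective d lam)
  have hle2 : Nat.card (Σ cc : {cc : ℕ × ℕ // cc ∈ addables lam},
      BddSSYT d (addBox lam cc.1)) ≤ Nat.card (Fin d × BddSSYT d lam) :=
    Nat.card_le_card_of_injective _ (RevMap_injective d lam)
  have heq := le_antisymm hle1 hle2
  rw [Nat.card_prod] at heq
  rw [nat_card_sigma (fun cc => BddSSYT d (addBox lam cc))] at heq
  rw [show Nat.card (Fin d) = d from by simp [Nat.card_eq_fintype_card]] at heq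
  exact heq

end PieriMaps


/-! ### Branching for standard Young tableaux -/

section SytBranch

/-- The subtype of standard Young tableaux. -/
abbrev SytB (m : ℕ) (nu : YoungDiagram) :=
  {T : Fin m ≃ {z : ℕ × ℕ // z ∈ nu.cells} // IsStandard T}

instance sytB_finite (m : ℕ) (nu : YoungDiagram) : Finite (SytB m nu) := by
  apply Finite.of_injective
    (fun T => ((T.1 : Fin m → {z : ℕ × ℕ // z ∈ nu.cells})))
  intro T T' h
  apply Subtype.ext
  apply Equiv.ext
  intro a
  exact congrFun h a

variable (n : ℕ) (mu : YoungDiagram)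

theorem last_corner (T : Fin (n + 1) ≃ {z : ℕ × ℕ // z ∈ mu.cells}) (hT : IsStandard T) :
    IsCorner mu (T (Fin.last n) : ℕ × ℕ) := by
  refine ⟨(T (Fin.last n)).2, ?_, ?_⟩
  · intro hmem
    have hTb : (T (T.symm ⟨((T (Fin.last n) : ℕ × ℕ).1 + 1,
        (T (Fin.last n) : ℕ × ℕ).2), hmem⟩) : ℕ × ℕ) =
        ((T (Fin.last n) : ℕ × ℕ).1 + 1, (T (Fin.last n) : ℕ × ℕ).2) := by
      rw [Equiv.apply_symm_apply]
    have hlt := hT.2 (Fin.last n)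
      (T.symm ⟨((T (Fin.last n) : ℕ × ℕ).1 + 1, (T (Fin.last n) : ℕ × ℕ).2), hmem⟩)
      (by rw [hTb]) (by rw [hTb]; omega)
    exact absurd hlt (not_lt.2 (Fin.le_last _))
  · intro hmem
    have hTb : (T (T.symm ⟨((T (Fin.last n) : ℕ × ℕ).1,
        (T (Fin.last n) : ℕ × ℕ).2 + 1), hmem⟩) : ℕ × ℕ) =
        ((T (Fin.last n) : ℕ × ℕ).1, (T (Fin.last n) : ℕ × ℕ).2 + 1) := by
      rw [Equiv.apply_symm_apply]
    have hlt := hT.1 (Fin.last n)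
      (T.symm ⟨((T (Fin.last n) : ℕ × ℕ).1, (T (Fin.last n) : ℕ × ℕ).2 + 1), hmem⟩)
      (by rw [hTb]) (by rw [hTb]; omega)
    exact absurd hlt (not_lt.2 (Fin.le_last _))

/-- The underlying function of the restriction of a standard tableau. -/
def dropF (T : Fin (n + 1) ≃ {z : ℕ × ℕ // z ∈ mu.cells}) (hT : IsStandard T) (a : Fin n) :
    {z : ℕ × ℕ // z ∈ (delBox mu (T (Fin.last n) : ℕ × ℕ)).cells} :=
  ⟨(T a.castSucc : ℕ × ℕ), by
    rw [YoungDiagram.mem_cells, mem_delBox (last_corner n mu T hT)]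
    refine ⟨(T a.castSucc).2, fun heq => ?_⟩
    have h2 := T.injective (Subtype.ext heq)
    exact absurd h2 (Fin.ne_of_lt (Fin.castSucc_lt_last a))⟩

theorem dropF_val (T : Fin (n + 1) ≃ {z : ℕ × ℕ // z ∈ mu.cells}) (hT : IsStandard T)
    (a : Fin n) : (dropF n mu T hT a : ℕ × ℕ) = (T a.castSucc : ℕ × ℕ) := rfl

theorem dropF_bij (T : Fin (n + 1) ≃ {z : ℕ × ℕ // z ∈ mu.cells}) (hT : IsStandard T) :
    Function.Bijective (dropF n mu T hT) := by
  constructor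
  · intro a b hab
    have h1 : (T a.castSucc : ℕ × ℕ) = (T b.castSucc : ℕ × ℕ) := by
      rw [← dropF_val n mu T hT a, ← dropF_val n mu T hT b, hab]
    exact Fin.castSucc_injective n (T.injective (Subtype.ext h1))
  · rintro ⟨z, hz⟩
    rw [YoungDiagram.mem_cells, mem_delBox (last_corner n mu T hT)] at hz
    have hne : T.symm ⟨z, hz.1⟩ ≠ Fin.last n := by
      intro heq
      have h3 := congrArg T heq
      rw [Equiv.apply_symm_apply] at h3
      exact hz.2 (congrArg Subtype.val h3)
    refine ⟨(T.symm ⟨z, hz.1⟩).castPred hne, Subtype.ext ?_⟩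
    rw [dropF_val]
    rw [Fin.castSucc_castPred, Equiv.apply_symm_apply]

/-- Restriction of a standard tableau with `n+1` cells to its first `n` cells. -/
noncomputable def dropT (T : Fin (n + 1) ≃ {z : ℕ × ℕ // z ∈ mu.cells}) (hT : IsStandard T) :
    Fin n ≃ {z : ℕ × ℕ // z ∈ (delBox mu (T (Fin.last n) : ℕ × ℕ)).cells} :=
  Equiv.ofBijective (dropF n mu T hT) (dropF_bij n mu T hT)

theorem dropT_apply (T : Fin (n + 1) ≃ {z : ℕ × ℕ // z ∈ mu.cells}) (hT : IsStandard T)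
    (a : Fin n) : (dropT n mu T hT a : ℕ × ℕ) = (T a.castSucc : ℕ × ℕ) := rfl

theorem dropT_standard (T : Fin (n + 1) ≃ {z : ℕ × ℕ // z ∈ mu.cells}) (hT : IsStandard T) :
    IsStandard (dropT n mu T hT) := by
  constructor
  · intro a b h1 h2
    rw [dropT_apply, dropT_apply] at h1 h2
    exact (Fin.castSucc_lt_castSucc_iff).1 (hT.1 a.castSucc b.castSucc h1 h2)
  · intro a b h1 h2
    rw [dropT_apply, dropT_apply] at h1 h2
    exact (Fin.castSucc_lt_castSucc_iff).1 (hT.2 a.castSucc b.castSucc h1 h2)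

/-- The underlying function of the extension of a standard tableau by a corner cell. -/
def extF (cc : ℕ × ℕ) (hcc : IsCorner mu cc)
    (S : Fin n ≃ {z : ℕ × ℕ // z ∈ (delBox mu cc).cells}) (a : Fin (n + 1)) :
    {z : ℕ × ℕ // z ∈ mu.cells} :=
  if h : a = Fin.last n then (⟨cc, hcc.1⟩ : {z : ℕ × ℕ // z ∈ mu.cells})
  else ⟨(S (a.castPred h) : ℕ × ℕ), by
    have hz := (S (a.castPred h)).2
    rw [YoungDiagram.mem_cells, mem_delBox hcc] at hz
    exact hz.1⟩

theorem extF_last (cc : ℕ × ℕ) (hcc : IsCorner mu cc)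
    (S : Fin n ≃ {z : ℕ × ℕ // z ∈ (delBox mu cc).cells}) :
    (extF n mu cc hcc S (Fin.last n) : ℕ × ℕ) = cc := by
  rw [extF, dif_pos rfl]

theorem extF_ne (cc : ℕ × ℕ) (hcc : IsCorner mu cc)
    (S : Fin n ≃ {z : ℕ × ℕ // z ∈ (delBox mu cc).cells}) (a : Fin (n + 1))
    (ha : a ≠ Fin.last n) :
    (extF n mu cc hcc S a : ℕ × ℕ) = (S (a.castPred ha) : ℕ × ℕ) := by
  rw [extF, dif_neg ha]

theorem extF_castSucc (cc : ℕ × ℕ) (hcc : IsCorner mu cc)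
    (S : Fin n ≃ {z : ℕ × ℕ // z ∈ (delBox mu cc).cells}) (a : Fin n) :
    (extF n mu cc hcc S a.castSucc : ℕ × ℕ) = (S a : ℕ × ℕ) := by
  rw [extF_ne n mu cc hcc S a.castSucc (Fin.ne_of_lt (Fin.castSucc_lt_last a))]
  rw [Fin.castPred_castSucc]

theorem extF_ne_corner (cc : ℕ × ℕ) (hcc : IsCorner mu cc)
    (S : Fin n ≃ {z : ℕ × ℕ // z ∈ (delBox mu cc).cells}) (a : Fin (n + 1))
    (ha : a ≠ Fin.last n) : (extF n mu cc hcc S a : ℕ × ℕ) ≠ cc := by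
  rw [extF_ne n mu cc hcc S a ha]
  have hz := (S (a.castPred ha)).2
  rw [YoungDiagram.mem_cells, mem_delBox hcc] at hz
  exact hz.2

theorem extF_bij (cc : ℕ × ℕ) (hcc : IsCorner mu cc)
    (S : Fin n ≃ {z : ℕ × ℕ // z ∈ (delBox mu cc).cells}) :
    Function.Bijective (extF n mu cc hcc S) := by
  constructor
  · intro a b hab
    have habv : (extF n mu cc hcc S a : ℕ × ℕ) = (extF n mu cc hcc S b : ℕ × ℕ) :=
      congrArg Subtype.val hab
    by_cases ha : a = Fin.last n <;> by_cases hb : b = Fin.last n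
    · rw [ha, hb]
    · exfalso
      rw [ha, extF_last] at habv
      exact extF_ne_corner n mu cc hcc S b hb habv.symm
    · exfalso
      rw [hb, extF_last] at habv
      exact extF_ne_corner n mu cc hcc S a ha habv
    · rw [extF_ne n mu cc hcc S a ha, extF_ne n mu cc hcc S b hb] at habv
      have h2 := S.injective (Subtype.ext habv)
      have h4 := congrArg Fin.val h2
      simp only [Fin.coe_castPred] at h4
      exact Fin.ext h4
  · rintro ⟨z, hz⟩
    by_cases hzc : z = cc
    · refine ⟨Fin.last n, Subtype.ext ?_⟩
      rw [extF_last]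
      exact hzc.symm
    · have hzd : z ∈ (delBox mu cc).cells := by
        rw [YoungDiagram.mem_cells, mem_delBox hcc]
        exact ⟨hz, hzc⟩
      refine ⟨(S.symm ⟨z, hzd⟩).castSucc, Subtype.ext ?_⟩
      rw [extF_castSucc, Equiv.apply_symm_apply]

/-- Extension of a standard tableau by a new corner cell. -/
noncomputable def extT (cc : ℕ × ℕ) (hcc : IsCorner mu cc)
    (S : Fin n ≃ {z : ℕ × ℕ // z ∈ (delBox mu cc).cells}) :
    Fin (n + 1) ≃ {z : ℕ × ℕ // z ∈ mu.cells} :=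
  Equiv.ofBijective (extF n mu cc hcc S) (extF_bij n mu cc hcc S)

theorem extT_apply (cc : ℕ × ℕ) (hcc : IsCorner mu cc)
    (S : Fin n ≃ {z : ℕ × ℕ // z ∈ (delBox mu cc).cells}) (a : Fin (n + 1)) :
    extT n mu cc hcc S a = extF n mu cc hcc S a := rfl

theorem extT_standard (cc : ℕ × ℕ) (hcc : IsCorner mu cc)
    (S : Fin n ≃ {z : ℕ × ℕ // z ∈ (delBox mu cc).cells}) (hS : IsStandard S) :
    IsStandard (extT n mu cc hcc S) := by
  have hlast : ∀ a : Fin (n + 1), a ≠ Fin.last n → a < Fin.last n := by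
    intro a ha
    rw [Fin.lt_def, Fin.val_last]
    have h5 := a.isLt
    have h6 : a.val ≠ n := fun hv => ha (Fin.ext (by rw [hv]; rfl))
    omega
  constructor
  · intro a b h1 h2
    rw [extT_apply, extT_apply] at h1 h2
    by_cases hb : b = Fin.last n
    · subst hb
      by_cases ha : a = Fin.last n
      · rw [ha] at h2
        omega
      · exact hlast a ha
    · by_cases ha : a = Fin.last n
      · exfalso
        rw [extF_ne n mu cc hcc S b hb] at h1 h2
        rw [ha, extF_last] at h1 h2
        have hz := (S (b.castPred hb)).2
        rw [YoungDiagram.mem_cells, mem_delBox hcc] at hz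
        have hmem2 : (cc.1, cc.2 + 1) ∈ mu := by
          have h3 : ((S (b.castPred hb) : ℕ × ℕ).1, (S (b.castPred hb) : ℕ × ℕ).2) ∈ mu := by
            rw [Prod.mk.eta]
            exact hz.1
          rw [← h1] at h3
          exact mu.up_left_mem le_rfl (by omega) h3
        exact hcc.2.2 hmem2
      · rw [extF_ne n mu cc hcc S a ha, extF_ne n mu cc hcc S b hb] at h1 h2
        have h3 := hS.1 _ _ h1 h2
        rw [Fin.lt_def] at h3 ⊢
        simpa using h3
  · intro a b h1 h2
    rw [extT_apply, extT_apply] at h1 h2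
    by_cases hb : b = Fin.last n
    · subst hb
      by_cases ha : a = Fin.last n
      · rw [ha] at h2
        omega
      · exact hlast a ha
    · by_cases ha : a = Fin.last n
      · exfalso
        rw [extF_ne n mu cc hcc S b hb] at h1 h2
        rw [ha, extF_last] at h1 h2
        have hz := (S (b.castPred hb)).2
        rw [YoungDiagram.mem_cells, mem_delBox hcc] at hz
        have hmem2 : (cc.1 + 1, cc.2) ∈ mu := by
          have h3 : ((S (b.castPred hb) : ℕ × ℕ).1, (S (b.castPred hb) : ℕ × ℕ).2) ∈ mu := by
            rw [Prod.mk.eta]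
            exact hz.1
          rw [← h1] at h3
          exact mu.up_left_mem (by omega) le_rfl h3
        exact hcc.2.1 hmem2
      · rw [extF_ne n mu cc hcc S a ha, extF_ne n mu cc hcc S b hb] at h1 h2
        have h3 := hS.2 _ _ h1 h2
        rw [Fin.lt_def] at h3 ⊢
        simpa using h3

/-- The forward map of the branching bijection. -/
noncomputable def PhiMap (p : SytB (n + 1) mu) :
    Σ cc : {cc : ℕ × ℕ // cc ∈ corners mu}, SytB n (delBox mu cc.1) :=
  ⟨⟨(p.1 (Fin.last n) : ℕ × ℕ), mem_corners.2 (last_corner n mu p.1 p.2)⟩,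
   ⟨dropT n mu p.1 p.2, dropT_standard n mu p.1 p.2⟩⟩

/-- The reverse map of the branching bijection. -/
noncomputable def PsiMap (q : Σ cc : {cc : ℕ × ℕ // cc ∈ corners mu},
    SytB n (delBox mu cc.1)) : SytB (n + 1) mu :=
  ⟨extT n mu q.1.1 (mem_corners.1 q.1.2) q.2.1,
   extT_standard n mu q.1.1 (mem_corners.1 q.1.2) q.2.1 q.2.2⟩

theorem PsiMap_PhiMap (p : SytB (n + 1) mu) : PsiMap n mu (PhiMap n mu p) = p := by
  obtain ⟨T, hT⟩ := p
  apply Subtype.ext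
  apply Equiv.ext
  intro a
  apply Subtype.ext
  show (extF n mu (T (Fin.last n) : ℕ × ℕ)
    (mem_corners.1 (mem_corners.2 (last_corner n mu T hT))) (dropT n mu T hT) a : ℕ × ℕ) =
    (T a : ℕ × ℕ)
  by_cases ha : a = Fin.last n
  · subst ha
    rw [extF_last]
  · rw [extF_ne n mu _ _ _ a ha, dropT_apply, Fin.castSucc_castPred]

theorem PhiMap_injective : Function.Injective (PhiMap n mu) :=
  Function.LeftInverse.injective (PsiMap_PhiMap n mu)

theorem PsiMap_injective : Function.Injective (PsiMap n mu) := by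
  intro q q' h
  have hcc : q.1.1 = q'.1.1 := by
    have h3 : ((PsiMap n mu q).1 (Fin.last n) : ℕ × ℕ) =
        ((PsiMap n mu q').1 (Fin.last n) : ℕ × ℕ) := by rw [h]
    rw [show ((PsiMap n mu q).1 (Fin.last n) : ℕ × ℕ) = q.1.1 from
        extF_last n mu q.1.1 (mem_corners.1 q.1.2) q.2.1,
      show ((PsiMap n mu q').1 (Fin.last n) : ℕ × ℕ) = q'.1.1 from
        extF_last n mu q'.1.1 (mem_corners.1 q'.1.2) q'.2.1] at h3
    exact h3
  obtain ⟨⟨c, hcm⟩, S, hS⟩ := q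
  obtain ⟨⟨c', hcm'⟩, S', hS'⟩ := q'
  simp only at hcc
  subst hcc
  have hpe : hcm = hcm' := rfl
  subst hpe
  have hSS : S = S' := by
    apply Equiv.ext
    intro a
    have h3 : ((PsiMap n mu ⟨⟨c, hcm⟩, S, hS⟩).1 a.castSucc : ℕ × ℕ) =
        ((PsiMap n mu ⟨⟨c, hcm⟩, S', hS'⟩).1 a.castSucc : ℕ × ℕ) := by rw [h]
    rw [show ((PsiMap n mu ⟨⟨c, hcm⟩, S, hS⟩).1 a.castSucc : ℕ × ℕ) = (S a : ℕ × ℕ) from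
        extF_castSucc n mu c (mem_corners.1 hcm) S a,
      show ((PsiMap n mu ⟨⟨c, hcm⟩, S', hS'⟩).1 a.castSucc : ℕ × ℕ) = (S' a : ℕ × ℕ) from
        extF_castSucc n mu c (mem_corners.1 hcm) S' a] at h3
    exact Subtype.ext h3
  subst hSS
  have hpe2 : hS = hS' := rfl
  subst hpe2
  rfl

theorem syt_branch : sytCount (n + 1) mu = ∑ cc ∈ corners mu, sytCount n (delBox mu cc) := by
  have hle1 : Nat.card (SytB (n + 1) mu) ≤
      Nat.card (Σ cc : {cc : ℕ × ℕ // cc ∈ corners mu}, SytB n (delBox mu cc.1)) :=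
    Nat.card_le_card_of_injective _ (PhiMap_injective n mu)
  have hle2 : Nat.card (Σ cc : {cc : ℕ × ℕ // cc ∈ corners mu}, SytB n (delBox mu cc.1)) ≤
      Nat.card (SytB (n + 1) mu) :=
    Nat.card_le_card_of_injective _ (PsiMap_injective n mu)
  have heq := le_antisymm hle1 hle2
  rw [nat_card_sigma (fun cc => SytB n (delBox mu cc))] at heq
  exact heq

end SytBranch


/-! ### Assembly: the master induction -/

theorem row0_addable (lam : YoungDiagram) : IsAddable lam (0, lam.rowLen 0) := by
  refine ⟨by rw [YoungDiagram.mem_iff_lt_rowLen]; exact lt_irrefl _, Or.inl rfl, ?_⟩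
  rcases Nat.eq_zero_or_pos (lam.rowLen 0) with h0 | hpos
  · exact Or.inl h0
  · right
    rw [YoungDiagram.mem_iff_lt_rowLen]
    show lam.rowLen 0 - 1 < lam.rowLen 0
    omega

instance : DecidableEq YoungDiagram := fun mu nu =>
  decidable_of_iff (mu.cells = nu.cells) (YoungDiagram.ext_iff).symm

theorem master (d : ℕ) : ∀ n : ℕ, ∀ S : Finset YoungDiagram,
    (∀ lam : YoungDiagram, lam ∈ S ↔ (lam.card = n ∧ lam.colLen 0 ≤ d)) →
    d ^ n = ∑ lam ∈ S, ssytCount d lam * sytCount n lam := by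
  intro n
  induction n with
  | zero =>
    intro S hS
    have hSeq : S = {⊥} := by
      apply Finset.ext
      intro lam
      rw [hS, Finset.mem_singleton]
      constructor
      · rintro ⟨h1, _⟩
        have h3 : lam.cells = ∅ := Finset.card_eq_zero.1 h1
        apply YoungDiagram.ext
        rw [h3, YoungDiagram.cells_bot]
      · rintro rfl
        refine ⟨by simp [YoungDiagram.card], ?_⟩
        have h4 : ¬ (0 : ℕ) < (⊥ : YoungDiagram).colLen 0 := by
          rw [← YoungDiagram.mem_iff_lt_colLen]
          exact YoungDiagram.notMem_bot _
        omega
    rw [hSeq, Finset.sum_singleton, ssytCount_bot, sytCount_bot, pow_zero, mul_one]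
  | succ n ih =>
    intro S hS
    rcases Nat.eq_zero_or_pos d with rfl | hd
    · have hSempty : S = ∅ := by
        apply Finset.eq_empty_of_forall_notMem
        intro lam hmem
        rw [hS] at hmem
        obtain ⟨h1, h2⟩ := hmem
        have h3 : lam.cells = ∅ := by
          apply Finset.eq_empty_of_forall_notMem
          rintro ⟨a, b⟩ hab
          have h4 : (0, 0) ∈ lam :=
            lam.up_left_mem (Nat.zero_le a) (Nat.zero_le b) hab
          have h5 := YoungDiagram.mem_iff_lt_colLen.1 h4
          omega
        have h6 : lam.card = 0 := by
          rw [YoungDiagram.card, h3, Finset.card_empty]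
        omega
      rw [hSempty, Finset.sum_empty, zero_pow (Nat.succ_ne_zero n)]
    · -- d ≥ 1
      set Sn : Finset YoungDiagram :=
        S.biUnion (fun mu => (corners mu).image (fun cc => delBox mu cc)) with hSn
      have hSnchar : ∀ lam : YoungDiagram, lam ∈ Sn ↔ (lam.card = n ∧ lam.colLen 0 ≤ d) := by
        intro lam
        rw [hSn, Finset.mem_biUnion]
        constructor
        · rintro ⟨mu, hmu, hmem⟩
          rw [Finset.mem_image] at hmem
          obtain ⟨cc, hcc, rfl⟩ := hmem
          rw [hS] at hmu
          rw [mem_corners] at hcc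
          constructor
          · rw [delBox_card hcc]
            omega
          · calc (delBox mu cc).colLen 0 ≤ mu.colLen 0 :=
                colLen_le_of_le (fun z hz => ((mem_delBox hcc z).1 hz).1) 0
              _ ≤ d := hmu.2
        · rintro ⟨h1, h2⟩
          have hadd := row0_addable lam
          refine ⟨addBox lam (0, lam.rowLen 0), ?_, ?_⟩
          · rw [hS]
            constructor
            · rw [addBox_card hadd]
              omega
            · by_contra hcon
              push_neg at hcon
              have h4 : (d, 0) ∈ addBox lam (0, lam.rowLen 0) :=
                YoungDiagram.mem_iff_lt_colLen.2 hcon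
              rw [mem_addBox hadd] at h4
              rcases h4 with heq | hmem
              · have := congrArg Prod.fst heq
                simp only at this
                omega
              · have h5 := YoungDiagram.mem_iff_lt_colLen.1 hmem
                omega
          · rw [Finset.mem_image]
            exact ⟨(0, lam.rowLen 0), mem_corners.2 (isCorner_addBox hadd),
              delBox_addBox hadd⟩
      have hIH := ih Sn hSnchar
      calc d ^ (n + 1) = d * d ^ n := by ring
        _ = d * ∑ lam ∈ Sn, ssytCount d lam * sytCount n lam := by rw [hIH]
        _ = ∑ lam ∈ Sn, (d * ssytCount d lam) * sytCount n lam := by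
            rw [Finset.mul_sum]
            apply Finset.sum_congr rfl
            intro lam _
            ring
        _ = ∑ lam ∈ Sn, (∑ cc ∈ addables lam, ssytCount d (addBox lam cc)) * sytCount n lam := by
            apply Finset.sum_congr rfl
            intro lam _
            rw [pieri_count]
        _ = ∑ lam ∈ Sn, ∑ cc ∈ addables lam,
              ssytCount d (addBox lam cc) * sytCount n lam := by
            apply Finset.sum_congr rfl
            intro lam _
            rw [Finset.sum_mul]
        _ = ∑ lam ∈ Sn, ∑ cc ∈ (addables lam).filter
              (fun cc => (addBox lam cc).colLen 0 ≤ d),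
              ssytCount d (addBox lam cc) * sytCount n lam := by
            apply Finset.sum_congr rfl
            intro lam _
            refine (Finset.sum_subset (Finset.filter_subset _ _) ?_).symm
            intro cc hcc hnot
            rw [Finset.mem_filter] at hnot
            have h7 : d < (addBox lam cc).colLen 0 := by
              rcases Nat.lt_or_ge d ((addBox lam cc).colLen 0) with h | h
              · exact h
              · exact absurd ⟨hcc, h⟩ hnot
            rw [ssytCount_eq_zero d _ h7, zero_mul]
        _ = ∑ x ∈ Sn.sigma (fun lam => (addables lam).filter
              (fun cc => (addBox lam cc).colLen 0 ≤ d)),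
              ssytCount d (addBox x.1 x.2) * sytCount n x.1 := by
            rw [Finset.sum_sigma]
        _ = ∑ y ∈ S.sigma (fun mu => corners mu),
              ssytCount d y.1 * sytCount n (delBox y.1 y.2) := by
            apply Finset.sum_nbij' (i := fun x => ⟨addBox x.1 x.2, x.2⟩)
              (j := fun y => ⟨delBox y.1 y.2, y.2⟩)
            · intro x hx
              rw [Finset.mem_sigma] at hx
              obtain ⟨hx1, hx2⟩ := hx
              rw [Finset.mem_filter] at hx2
              obtain ⟨hx2, hx3⟩ := hx2
              rw [mem_addables] at hx2
              rw [Finset.mem_sigma]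
              rw [hSnchar] at hx1
              constructor
              · rw [hS]
                refine ⟨?_, hx3⟩
                rw [addBox_card hx2]
                omega
              · exact mem_corners.2 (isCorner_addBox hx2)
            · intro y hy
              rw [Finset.mem_sigma] at hy
              obtain ⟨hy1, hy2⟩ := hy
              rw [hS] at hy1
              rw [mem_corners] at hy2
              rw [Finset.mem_sigma]
              constructor
              · rw [hSnchar]
                constructor
                · rw [delBox_card hy2]
                  omega
                · calc (delBox y.1 y.2).colLen 0 ≤ y.1.colLen 0 :=
                      colLen_le_of_le (fun z hz => ((mem_delBox hy2 z).1 hz).1) 0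
                    _ ≤ d := hy1.2
              · rw [Finset.mem_filter]
                refine ⟨mem_addables.2 (isAddable_delBox hy2), ?_⟩
                rw [addBox_delBox hy2]
                exact hy1.2
            · intro x hx
              rw [Finset.mem_sigma] at hx
              obtain ⟨hx1, hx2⟩ := hx
              rw [Finset.mem_filter] at hx2
              have hadd := mem_addables.1 hx2.1
              have h8 : delBox (addBox x.1 x.2) x.2 = x.1 := delBox_addBox hadd
              exact Sigma.ext h8 (heq_of_eq rfl)
            · intro y hy
              rw [Finset.mem_sigma] at hy
              have hcor := mem_corners.1 hy.2
              have h8 : addBox (delBox y.1 y.2) y.2 = y.1 := addBox_delBox hcor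
              exact Sigma.ext h8 (heq_of_eq rfl)
            · intro x hx
              rw [Finset.mem_sigma, Finset.mem_filter] at hx
              have hadd := mem_addables.1 hx.2.1
              show ssytCount d (addBox x.1 x.2) * sytCount n x.1 =
                ssytCount d (addBox x.1 x.2) * sytCount n (delBox (addBox x.1 x.2) x.2)
              rw [delBox_addBox hadd]
        _ = ∑ mu ∈ S, ∑ cc ∈ corners mu,
              ssytCount d mu * sytCount n (delBox mu cc) := by
            rw [Finset.sum_sigma]
        _ = ∑ mu ∈ S, ssytCount d mu * sytCount (n + 1) mu := by
            apply Finset.sum_congr rfl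
            intro mu _
            rw [syt_branch, Finset.mul_sum]

end SWD

/-- The total dimension identity of Schur–Weyl duality:
`d^n = Σ_λ s_λ(d) · f^λ`, the sum running over all partitions `λ` of `n` with at most
`d` parts (rows). -/
theorem schur_weyl_dimension_count (n d : ℕ) (S : Finset YoungDiagram)
    (hS : ∀ lam : YoungDiagram, lam ∈ S ↔ (lam.card = n ∧ lam.colLen 0 ≤ d)) :
    d ^ n = ∑ lam ∈ S, ssytCount d lam * sytCount n lam :=
  SWD.master d n S hS
end
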